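/- arXiv:2102.03731 — 10 statements merged into one kernel-verified Lean document; each statement's English description precedes it below -/
import Mathlib

section
/- Let N ≥ 3 and let positive step sizes τ_1,…,τ_N be given with step ratios r_k := τ_k/τ_{k-1} satisfying 0 < r_k < r_* for 2 ≤ k ≤ N, where r_* is the unique positive root of 1+2r−r^{3/2}=0 (r_* ≈ 4.864). Then for every real sequence w_1,…,w_N and every k with 2 ≤ k ≤ N−1 one has 2 w_k (b_0^{(k)} w_k + b_1^{(k)} w_{k-1}) ≥ (r_{k+1}^{3/2}/(1+r_{k+1})) w_k²/τ_k − (r_k^{3/2}/(1+r_k)) w_{k-1}²/τ_{k-1} + R_L(r_k, r_{k+1}) w_k²/τ_k. -/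
/-- The adjacent time-step ratio `r_k := τ_k / τ_{k-1}`. -/
noncomputable def ratio (τ : ℕ → ℝ) (k : ℕ) : ℝ := τ k / τ (k - 1)

/-- The BDF2 kernel `b_0^{(n)} := (1+2r_n)/(τ_n(1+r_n))`. -/
noncomputable def b0 (τ : ℕ → ℝ) (n : ℕ) : ℝ :=
  (1 + 2 * ratio τ n) / (τ n * (1 + ratio τ n))

/-- The BDF2 kernel `b_1^{(n)} := -r_n²/(τ_n(1+r_n))`. -/
noncomputable def b1 (τ : ℕ → ℝ) (n : ℕ) : ℝ :=
  -(ratio τ n ^ 2) / (τ n * (1 + ratio τ n))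

/-- The step-ratio function `R_L(z,s) := (2+4z−z^{3/2})/(1+z) − s^{3/2}/(1+s)`. -/
noncomputable def RL (z s : ℝ) : ℝ :=
  (2 + 4 * z - z ^ ((3 : ℝ) / 2)) / (1 + z) - s ^ ((3 : ℝ) / 2) / (1 + s)

lemma bdf2_aux (a u x y S : ℝ) (ha : 0 < a) (hu : 0 < u) :
    2 * x * ((1 + 2 * u ^ 2) / (u ^ 2 * a * (1 + u ^ 2)) * x +
        -((u ^ 2) ^ 2) / (u ^ 2 * a * (1 + u ^ 2)) * y) ≥
      S * (x ^ 2 / (u ^ 2 * a)) - u ^ 3 / (1 + u ^ 2) * (y ^ 2 / a)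
      + ((2 + 4 * u ^ 2 - u ^ 3) / (1 + u ^ 2) - S) * (x ^ 2 / (u ^ 2 * a)) := by
  rw [ge_iff_le, ← sub_nonneg]
  have h2 : (0:ℝ) < 1 + u ^ 2 := by positivity
  have key : 2 * x * ((1 + 2 * u ^ 2) / (u ^ 2 * a * (1 + u ^ 2)) * x +
        -((u ^ 2) ^ 2) / (u ^ 2 * a * (1 + u ^ 2)) * y) -
      (S * (x ^ 2 / (u ^ 2 * a)) - u ^ 3 / (1 + u ^ 2) * (y ^ 2 / a)
      + ((2 + 4 * u ^ 2 - u ^ 3) / (1 + u ^ 2) - S) * (x ^ 2 / (u ^ 2 * a)))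
      = u * (x - u * y) ^ 2 / (a * (1 + u ^ 2)) := by
    field_simp
    ring
  rw [key]
  positivity

theorem bdf2_kernel_lower_bound
    (N : ℕ) (hN : 3 ≤ N) (τ : ℕ → ℝ)
    (hτ : ∀ k, 1 ≤ k → k ≤ N → 0 < τ k)
    (rstar : ℝ) (hrstar_pos : 0 < rstar)
    (hrstar_root : 1 + 2 * rstar - rstar ^ ((3 : ℝ) / 2) = 0)
    (hr : ∀ k, 2 ≤ k → k ≤ N → 0 < ratio τ k ∧ ratio τ k < rstar)
    (w : ℕ → ℝ) (k : ℕ) (hk : 2 ≤ k) (hkN : k ≤ N - 1) :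
    2 * w k * (b0 τ k * w k + b1 τ k * w (k - 1)) ≥
      ratio τ (k + 1) ^ ((3 : ℝ) / 2) / (1 + ratio τ (k + 1)) * (w k ^ 2 / τ k)
      - ratio τ k ^ ((3 : ℝ) / 2) / (1 + ratio τ k) * (w (k - 1) ^ 2 / τ (k - 1))
      + RL (ratio τ k) (ratio τ (k + 1)) * (w k ^ 2 / τ k) := by
  have hτk1 : 0 < τ (k - 1) := hτ (k - 1) (by omega) (by omega)
  have hrk : 0 < ratio τ k := (hr k hk (by omega)).1
  set u := Real.sqrt (ratio τ k) with hudef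
  have hu : 0 < u := Real.sqrt_pos.mpr hrk
  have hru : ratio τ k = u ^ 2 := (Real.sq_sqrt hrk.le).symm
  have hr32 : ratio τ k ^ ((3:ℝ)/2) = u ^ 3 := by
    rw [hru, ← Real.rpow_natCast u 2, ← Real.rpow_mul hu.le,
      show (2:ℕ) * ((3:ℝ)/2) = ((3:ℕ):ℝ) by norm_num, Real.rpow_natCast]
  have hτk_eq : τ k = u ^ 2 * τ (k - 1) := by
    rw [← hru]
    unfold ratio
    field_simp
  unfold RL b0 b1
  rw [hr32, hru, hτk_eq]
  exact bdf2_aux (τ (k - 1)) u (w k) (w (k - 1)) _ hτk1 hu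
end

section
/- Let N ≥ 3 and let positive step sizes τ_1,…,τ_N be given with step ratios r_k := τ_k/τ_{k-1} satisfying 0 < r_k < r_* for 2 ≤ k ≤ N, where r_* is the unique positive root of 1+2r−r^{3/2}=0 (r_* ≈ 4.864). Then for every n with 2 ≤ n ≤ N−1 and every real sequence w_2,…,w_n, the BDF2 kernels are positive definite in the sense that 2 Σ_{k=2}^{n} w_k Σ_{j=2}^{k} b_{k-j}^{(k)} w_j ≥ Σ_{k=2}^{n} R_L(r_k, r_{k+1}) w_k²/τ_k. -/
/-- The BDF2 kernels `b_j^{(n)}`: `b_0^{(n)}`, `b_1^{(n)}` and zero for `j ≥ 2`. -/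
noncomputable def bker (τ : ℕ → ℝ) (j n : ℕ) : ℝ :=
  if j = 0 then b0 τ n else if j = 1 then b1 τ n else 0

/-- The key algebraic (Young-type) inequality behind BDF2 positive definiteness,
written with `u = √r`, `r = u²`, `τ_k = u²·t`, `τ_{k-1} = t`. -/
lemma bdf2_step_alg (u t w0 w1 : ℝ) (hu : 0 < u) (ht : 0 < t) :
    (2 + 4*u^2 - u^3)/(1+u^2) * (w1^2/(u^2*t)) ≤
    2 * (w1 * ((1 + 2*(u^2))/((u^2*t)*(1+u^2)) * w1 + -((u^2)^2)/((u^2*t)*(1+u^2)) * w0))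
      + u^3/(1+u^2) * (w0^2/t) := by
  have h1 : (0:ℝ) < 1 + u^2 := by positivity
  have hd : 2 * (w1 * ((1 + 2*(u^2))/((u^2*t)*(1+u^2)) * w1 + -((u^2)^2)/((u^2*t)*(1+u^2)) * w0))
      + u^3/(1+u^2) * (w0^2/t) - (2 + 4*u^2 - u^3)/(1+u^2) * (w1^2/(u^2*t))
      = u^3 * (w1 - u*w0)^2 / ((u^2*t)*(1+u^2)) := by
    field_simp
    ring
  have hpos : 0 ≤ u^3 * (w1 - u*w0)^2 / ((u^2*t)*(1+u^2)) := by positivity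
  linarith

/-- Evaluation of the inner convolution sum for `k ≥ 3`. -/
lemma bdf2_inner_sum (τ : ℕ → ℝ) (w : ℕ → ℝ) (k : ℕ) (hk : 3 ≤ k) :
    ∑ j ∈ Finset.Icc 2 k, bker τ (k - j) k * w j
      = b0 τ k * w k + b1 τ k * w (k - 1) := by
  obtain ⟨m, rfl⟩ : ∃ m, k = m + 3 := ⟨k - 3, by omega⟩
  rw [Finset.sum_Icc_succ_top (by omega), Finset.sum_Icc_succ_top (by omega),
    Finset.sum_eq_zero]
  · have h1 : m + 3 - (m + 2) = 1 := by omega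
    have h0 : m + 3 - (m + 3) = 0 := by omega
    have h2 : m + 3 - 1 = m + 2 := by omega
    rw [h1, h0, h2]
    simp [bker]
    ring
  · intro j hj
    simp only [Finset.mem_Icc] at hj
    rw [bker, if_neg (by omega), if_neg (by omega), zero_mul]

/-- Converting `r^(3/2)` with `r = u²`, `u = √r ≥ 0`, to `u³`. -/
lemma sq_rpow_three_halves (u : ℝ) (hu : 0 ≤ u) :
    (u ^ 2) ^ ((3 : ℝ) / 2) = u ^ 3 := by
  rw [← Real.rpow_natCast u 2, ← Real.rpow_mul hu,
    show ((2:ℕ):ℝ) * (3/2) = ((3:ℕ):ℝ) by norm_num, Real.rpow_natCast]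

theorem bdf2_kernels_positive_definite
    (N : ℕ) (hN : 3 ≤ N) (τ : ℕ → ℝ)
    (hτ : ∀ k, 1 ≤ k → k ≤ N → 0 < τ k)
    (rstar : ℝ) (hrstar_pos : 0 < rstar)
    (hrstar_root : 1 + 2 * rstar - rstar ^ ((3 : ℝ) / 2) = 0)
    (hr : ∀ k, 2 ≤ k → k ≤ N → 0 < ratio τ k ∧ ratio τ k < rstar)
    (n : ℕ) (hn : 2 ≤ n) (hnN : n ≤ N - 1) (w : ℕ → ℝ) :
    2 * ∑ k ∈ Finset.Icc 2 n, w k * ∑ j ∈ Finset.Icc 2 k, bker τ (k - j) k * w j ≥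
      ∑ k ∈ Finset.Icc 2 n, RL (ratio τ k) (ratio τ (k + 1)) * (w k ^ 2 / τ k) := by
  -- the per-step new-term inequality, in terms of the original data
  have hstep : ∀ k, 2 ≤ k → k ≤ N →
      (2 + 4 * ratio τ k - ratio τ k ^ ((3:ℝ)/2)) / (1 + ratio τ k) * (w k ^ 2 / τ k) ≤
      2 * (w k * (b0 τ k * w k + b1 τ k * w (k - 1)))
        + ratio τ k ^ ((3:ℝ)/2) / (1 + ratio τ k) * (w (k-1) ^ 2 / τ (k-1)) := by
    intro k hk2 hkN
    have hτk : 0 < τ k := hτ k (by omega) hkN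
    have hτk1 : 0 < τ (k - 1) := hτ (k-1) (by omega) (by omega)
    have hRk : 0 < ratio τ k := (hr k hk2 hkN).1
    set u := Real.sqrt (ratio τ k) with hudef
    have hu : 0 < u := Real.sqrt_pos.mpr hRk
    have hR2 : ratio τ k = u ^ 2 := (Real.sq_sqrt hRk.le).symm
    have hτeq : τ k = u ^ 2 * τ (k - 1) := by
      rw [← hR2, ratio, div_mul_cancel₀]
      exact hτk1.ne'
    have key := bdf2_step_alg u (τ (k-1)) (w (k-1)) (w k) hu hτk1
    rw [b0, b1, hR2, hτeq, sq_rpow_three_halves u hu.le]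
    exact key
  -- main induction, with the slack term carried along
  have main : ∀ m, 2 ≤ m → m ≤ N - 1 →
      2 * ∑ k ∈ Finset.Icc 2 m, w k * ∑ j ∈ Finset.Icc 2 k, bker τ (k - j) k * w j ≥
        (∑ k ∈ Finset.Icc 2 m, RL (ratio τ k) (ratio τ (k + 1)) * (w k ^ 2 / τ k))
          + ratio τ (m+1) ^ ((3:ℝ)/2) / (1 + ratio τ (m+1)) * (w m ^ 2 / τ m) := by
    intro m hm
    induction m, hm using Nat.le_induction with
    | base =>
      intro _
      have h2 := hstep 2 le_rfl (by omega)
      simp only [Finset.Icc_self, Finset.sum_singleton] at *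
      have hinner : bker τ (2 - 2) 2 * w 2 = b0 τ 2 * w 2 := by
        norm_num [bker]
      rw [hinner, RL]
      have h21 : (2:ℕ) - 1 = 1 := by norm_num
      rw [h21] at h2
      have hb1w : w 2 * (b0 τ 2 * w 2 + b1 τ 2 * w 1) =
          w 2 * (b0 τ 2 * w 2) + w 2 * (b1 τ 2 * w 1) := by ring
      -- take w0 := 0 route instead: redo hstep-like inequality with w replaced?
      -- simpler: use bdf2_step_alg directly with w0 = 0
      clear h2 hb1w
      have hτ2 : 0 < τ 2 := hτ 2 (by omega) (by omega)
      have hτ1 : 0 < τ 1 := hτ 1 (by omega) (by omega)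
      have hR2pos : 0 < ratio τ 2 := (hr 2 le_rfl (by omega)).1
      set u := Real.sqrt (ratio τ 2) with hudef
      have hu : 0 < u := Real.sqrt_pos.mpr hR2pos
      have hR2 : ratio τ 2 = u ^ 2 := (Real.sq_sqrt hR2pos.le).symm
      have hτeq : τ 2 = u ^ 2 * τ 1 := by
        rw [← hR2, ratio]
        norm_num
        rw [div_mul_cancel₀]
        exact hτ1.ne'
      have key := bdf2_step_alg u (τ 1) 0 (w 2) hu hτ1
      rw [b0, hR2, hτeq, sq_rpow_three_halves u hu.le]
      have hzero : (0:ℝ)^2 / τ 1 = 0 := by simp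
      rw [hzero] at key
      simp only [mul_zero, add_zero] at key
      linarith
    | succ n hn2 ih =>
      intro hle
      have ihh := ih (by omega)
      have hnew := hstep (n+1) (by omega) (by omega)
      rw [Finset.sum_Icc_succ_top (by omega : 2 ≤ n + 1),
        bdf2_inner_sum τ w (n+1) (by omega),
        Finset.sum_Icc_succ_top (by omega : 2 ≤ n + 1)]
      simp only [Nat.add_sub_cancel] at hnew ⊢
      rw [RL]
      linarith
  have hfin := main n hn hnN
  have hn1 : 2 ≤ n + 1 := by omega
  have hRn1 : 0 < ratio τ (n+1) := (hr (n+1) hn1 (by omega)).1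
  have hτn : 0 < τ n := hτ n (by omega) (by omega)
  have hslack : 0 ≤ ratio τ (n+1) ^ ((3:ℝ)/2) / (1 + ratio τ (n+1)) * (w n ^ 2 / τ n) := by
    apply mul_nonneg
    · apply div_nonneg (Real.rpow_nonneg hRn1.le _)
      linarith
    · positivity
  linarith
end

section
/- Let N ≥ 2 and let positive step sizes τ_1,…,τ_N be given with step ratios r_k := τ_k/τ_{k-1}. Then the DOC kernels admit the explicit product representation θ_{n-j}^{(n)} = (1/b_0^{(j)}) Π_{i=j+1}^{n} (r_i²/(1+2r_i)) for all 2 ≤ j ≤ n ≤ N (with the empty product equal to 1); in particular every DOC kernel θ_{n-j}^{(n)} is strictly positive. -/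
theorem doc_kernels_product_formula
    (N : ℕ) (hN : 2 ≤ N) (τ : ℕ → ℝ)
    (hτ : ∀ k, 1 ≤ k → k ≤ N → 0 < τ k)
    (θ : ℕ → ℕ → ℝ)
    (hθdiag : ∀ n, 2 ≤ n → θ n n = 1 / b0 τ n)
    (hθrec : ∀ n k, 2 ≤ k → k < n →
      θ n k = -(1 / b0 τ k) * ∑ j ∈ Finset.Icc (k + 1) n, θ n j * bker τ (j - k) j) :
    ∀ j n, 2 ≤ j → j ≤ n → n ≤ N →
      θ n j = (1 / b0 τ j) * ∏ i ∈ Finset.Icc (j + 1) n,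
        ratio τ i ^ 2 / (1 + 2 * ratio τ i) ∧ 0 < θ n j := by
  have hr : ∀ k, 2 ≤ k → k ≤ N → 0 < ratio τ k := by
    intro k hk hkN
    exact div_pos (hτ k (by omega) hkN) (hτ (k - 1) (by omega) (by omega))
  have hb0 : ∀ k, 2 ≤ k → k ≤ N → 0 < b0 τ k := by
    intro k hk hkN
    have h1 := hr k hk hkN
    have h2 := hτ k (by omega) hkN
    exact div_pos (by linarith) (by nlinarith)
  have hprodpos : ∀ j n, 2 ≤ j → n ≤ N →
      0 < ∏ i ∈ Finset.Icc (j + 1) n, ratio τ i ^ 2 / (1 + 2 * ratio τ i) := by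
    intro j n hj hnN
    apply Finset.prod_pos
    intro i hi
    simp only [Finset.mem_Icc] at hi
    have hri := hr i (by omega) (by omega)
    exact div_pos (pow_pos hri 2) (by linarith)
  suffices H : ∀ d j n, 2 ≤ j → j ≤ n → n ≤ N → n - j = d →
      θ n j = (1 / b0 τ j) * ∏ i ∈ Finset.Icc (j + 1) n,
        ratio τ i ^ 2 / (1 + 2 * ratio τ i) by
    intro j n hj hjn hnN
    have hf := H (n - j) j n hj hjn hnN rfl
    refine ⟨hf, ?_⟩
    rw [hf]
    exact mul_pos (div_pos one_pos (hb0 j hj (le_trans hjn hnN))) (hprodpos j n hj hnN)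
  intro d
  induction d with
  | zero =>
    intro j n hj hjn hnN hd
    have hjn' : j = n := by omega
    subst hjn'
    rw [hθdiag j hj, Finset.Icc_eq_empty (by omega), Finset.prod_empty, mul_one]
  | succ d ih =>
    intro j n hj hjn hnN hd
    have hjltn : j < n := by omega
    have hrec := hθrec n j hj hjltn
    have hsum : ∑ i ∈ Finset.Icc (j + 1) n, θ n i * bker τ (i - j) i
        = θ n (j + 1) * b1 τ (j + 1) := by
      rw [Finset.sum_eq_single_of_mem (j + 1) (by simp [Finset.mem_Icc]; omega)]
      · simp [bker]
      · intro b hb hb1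
        simp only [Finset.mem_Icc] at hb
        have h0 : b - j ≠ 0 := by omega
        have h1 : b - j ≠ 1 := by omega
        simp [bker, h0, h1]
    have hih := ih (j + 1) n (by omega) (by omega) hnN (by omega)
    have hsplit : ∏ i ∈ Finset.Icc (j + 1) n, ratio τ i ^ 2 / (1 + 2 * ratio τ i)
        = (ratio τ (j + 1) ^ 2 / (1 + 2 * ratio τ (j + 1))) *
          ∏ i ∈ Finset.Icc (j + 1 + 1) n, ratio τ i ^ 2 / (1 + 2 * ratio τ i) := by
      have h : Finset.Icc (j + 1) n = insert (j + 1) (Finset.Icc (j + 1 + 1) n) := by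
        ext x; simp only [Finset.mem_Icc, Finset.mem_insert]; omega
      rw [h, Finset.prod_insert (by simp [Finset.mem_Icc])]
    have hr1 := hr (j + 1) (by omega) (by omega)
    have hτ1 := hτ (j + 1) (by omega) (by omega)
    have h1r : (0:ℝ) < 1 + ratio τ (j + 1) := by linarith
    have h2r : (0:ℝ) < 1 + 2 * ratio τ (j + 1) := by linarith
    have key : (1 / b0 τ (j + 1)) * (- b1 τ (j + 1))
        = ratio τ (j + 1) ^ 2 / (1 + 2 * ratio τ (j + 1)) := by
      unfold b0 b1
      rw [div_div_eq_mul_div, one_mul, neg_div, neg_neg]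
      rw [div_mul_div_comm, mul_comm (τ (j + 1) * (1 + ratio τ (j + 1)))]
      rw [mul_div_mul_right _ _ (by positivity)]
    rw [hrec, hsum, hih, hsplit]
    linear_combination ((1 / b0 τ j) *
      ∏ i ∈ Finset.Icc (j + 1 + 1) n, ratio τ i ^ 2 / (1 + 2 * ratio τ i)) * key
end

section
/- Let N ≥ 2 and let positive step sizes τ_1,…,τ_N be given with step ratios r_k := τ_k/τ_{k-1} satisfying the condition S0 (0 < r_k ≤ r_user for all 2 ≤ k ≤ N, for some r_user < r_* ≈ 4.864, the positive root of 1+2r−r^{3/2}=0). Then the DOC kernels are positive definite: for every n with 2 ≤ n ≤ N and every real sequence w_2,…,w_n that is not identically zero, Σ_{k=2}^{n} w_k Σ_{j=2}^{k} θ_{k-j}^{(k)} w_j > 0. -/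
/-- `x^(3/2) = (√x)³` for nonnegative `x`. -/
lemma doc_rpow_three_halves {x : ℝ} (hx : 0 ≤ x) : x ^ ((3 : ℝ) / 2) = Real.sqrt x ^ 3 := by
  rw [show ((3:ℝ)/2) = (1/2) * 3 by norm_num, Real.rpow_mul hx,
    show ((3:ℝ) = ((3:ℕ):ℝ)) by norm_num, Real.rpow_natCast, ← Real.sqrt_eq_rpow]

/-- The core scalar inequality in square-root variables. -/
lemma doc_core (σ c t a : ℝ) (hσ0 : 0 < σ) (hσ3 : σ^3 = 1 + 2*σ^2)
    (hcσ : c < σ) (ht0 : 0 < t) (htc : t ≤ c) (ha0 : 0 < a) (hac : a ≤ c) :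
    a^3 * (1 + t^2) < (2 + 4*t^2 - t^3) * (1 + a^2) := by
  have hσ2 : 2 < σ := by nlinarith
  have hc0 : 0 < c := lt_of_lt_of_le ha0 hac
  have htσ : t ≤ σ := le_trans htc hcσ.le
  have h1 : a^3 * (1 + c^2) ≤ c^3 * (1 + a^2) := by
    nlinarith [mul_nonneg (mul_nonneg (mul_pos ha0 ha0).le (mul_pos hc0 hc0).le)
      (sub_nonneg.2 hac), sub_nonneg.2 hac, sq_nonneg (a + c), mul_pos ha0 hc0]
  have h2 : c^3 * (1 + σ^2) < σ^3 * (1 + c^2) := by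
    nlinarith [mul_pos (mul_pos hc0 hc0) (mul_pos hσ0 hσ0), sub_pos.2 hcσ,
      mul_pos (mul_pos (mul_pos hc0 hc0) (mul_pos hσ0 hσ0)) (sub_pos.2 hcσ),
      mul_pos hc0 hσ0, sq_nonneg (c + σ)]
  have hq : 0 ≤ (1 + σ^2)*t^2 + (σ - 2)*t + σ*(σ - 2) := by nlinarith [sq_nonneg t]
  have h3 : σ^3 * (1 + t^2) ≤ (2 + 4*t^2 - t^3) * (1 + σ^2) := by
    have hM := mul_nonneg (sub_nonneg.2 htσ) hq
    have hE : (1 + 2*σ^2 - σ^3) * (1 + t^2) = 0 := by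
      rw [show (1 + 2*σ^2 - σ^3) = 0 by linarith]; ring
    nlinarith [hM, hE]
  have d1 : a^3/(1+a^2) ≤ c^3/(1+c^2) := by
    rw [div_le_div_iff₀ (by positivity) (by positivity)]; linarith
  have d2 : c^3/(1+c^2) < σ^3/(1+σ^2) := by
    rw [div_lt_div_iff₀ (by positivity) (by positivity)]; linarith
  have d3 : σ^3/(1+σ^2) ≤ (2 + 4*t^2 - t^3)/(1+t^2) := by
    rw [div_le_div_iff₀ (by positivity) (by positivity)]; linarith
  have hfin : a^3/(1+a^2) < (2 + 4*t^2 - t^3)/(1+t^2) :=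
    lt_of_le_of_lt d1 (lt_of_lt_of_le d2 d3)
  rw [div_lt_div_iff₀ (by positivity) (by positivity)] at hfin
  exact hfin

set_option maxHeartbeats 1600000 in
theorem doc_kernels_positive_definite
    (N : ℕ) (hN : 2 ≤ N) (τ : ℕ → ℝ)
    (hτ : ∀ k, 1 ≤ k → k ≤ N → 0 < τ k)
    (ruser rstar : ℝ) (hruser_pos : 0 < ruser)
    (hrstar_pos : 0 < rstar)
    (hrstar_root : 1 + 2 * rstar - rstar ^ ((3 : ℝ) / 2) = 0)
    (hru : ruser < rstar)
    (hr : ∀ k, 2 ≤ k → k ≤ N → 0 < ratio τ k ∧ ratio τ k ≤ ruser)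
    (θ : ℕ → ℕ → ℝ)
    (hθdiag : ∀ n, 2 ≤ n → θ n n = 1 / b0 τ n)
    (hθrec : ∀ n k, 2 ≤ k → k < n →
      θ n k = -(1 / b0 τ k) * ∑ j ∈ Finset.Icc (k + 1) n, θ n j * bker τ (j - k) j)
    (n : ℕ) (hn : 2 ≤ n) (hnN : n ≤ N) (w : ℕ → ℝ)
    (hw : ∃ k, 2 ≤ k ∧ k ≤ n ∧ w k ≠ 0) :
    0 < ∑ k ∈ Finset.Icc 2 n, w k * ∑ j ∈ Finset.Icc 2 k, θ k j * w j := by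
  -- basic positivity
  have hrpos : ∀ k, 2 ≤ k → k ≤ N → 0 < ratio τ k := fun k h2 hk => (hr k h2 hk).1
  have hb0 : ∀ k, 2 ≤ k → k ≤ N → 0 < b0 τ k := by
    intro k h2 hk
    have h1 := hτ k (by omega) hk
    have h3 := hrpos k h2 hk
    exact div_pos (by nlinarith) (by nlinarith)
  have hb1 : ∀ k, 2 ≤ k → k ≤ N → b1 τ k < 0 := by
    intro k h2 hk
    have h1 := hτ k (by omega) hk
    have h3 := hrpos k h2 hk
    exact div_neg_of_neg_of_pos (by nlinarith) (by nlinarith)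
  set d : ℕ → ℝ := fun i => -(b1 τ (i+1)) / b0 τ i with hd
  have hdpos : ∀ i, 2 ≤ i → i + 1 ≤ N → 0 < d i := by
    intro i h2 hi
    exact div_pos (neg_pos.2 (hb1 (i+1) (by omega) hi)) (hb0 i h2 (by omega))
  set p : ℕ → ℝ := fun j => ∏ i ∈ Finset.Icc 2 (j-1), d i with hp
  have hppos : ∀ j, j ≤ N → 0 < p j := by
    intro j hj
    apply Finset.prod_pos
    intro i hi
    obtain ⟨hi2, hi1⟩ := Finset.mem_Icc.1 hi
    exact hdpos i hi2 (by omega)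
  set S : ℕ → ℝ := fun k => ∑ j ∈ Finset.Icc 2 k, w j / p j with hSdef
  set u : ℕ → ℝ := fun k => p k / b0 τ k * S k with hu
  have hS1 : S 1 = 0 := by
    simp only [hSdef]
    rw [Finset.Icc_eq_empty (by omega)]
    simp
  have hu1 : u 1 = 0 := by simp only [hu, hS1, mul_zero]
  have hSstep : ∀ k, 2 ≤ k → S k = S (k-1) + w k / p k := by
    intro k h2
    obtain ⟨l, rfl⟩ : ∃ l, k = l + 1 := ⟨k-1, by omega⟩
    simp only [hSdef, Nat.add_sub_cancel]
    rw [Finset.sum_Icc_succ_top (by omega : 2 ≤ l + 1)]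
  have hpstep : ∀ k, 3 ≤ k → p k = p (k-1) * d (k-1) := by
    intro k h3
    obtain ⟨l, rfl⟩ : ∃ l, k = l + 2 := ⟨k-2, by omega⟩
    simp only [hp, Nat.add_sub_cancel, show l+2-1 = l+1 from rfl, show l+1-1 = l from rfl]
    rw [Finset.prod_Icc_succ_top (by omega : 2 ≤ l + 1)]
  -- closed form for θ
  have hθcf : ∀ k, 2 ≤ k → k ≤ n → ∀ j, 2 ≤ j → j ≤ k → θ k j = p k / p j / b0 τ k := by
    intro k hk2 hkn
    have hkN : k ≤ N := hkn.trans hnN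
    have key : ∀ q j, 2 ≤ j → j ≤ k → k - j = q → θ k j = p k / p j / b0 τ k := by
      intro q
      induction q with
      | zero =>
        intro j h2 hjk hq
        have : j = k := by omega
        subst this
        rw [hθdiag j h2, div_self (ne_of_gt (hppos j hkN))]
      | succ q ih =>
        intro j h2 hjk hq
        have hjk' : j + 1 ≤ k := by omega
        have recur := hθrec k j h2 (by omega)
        have hsum : ∑ i ∈ Finset.Icc (j+1) k, θ k i * bker τ (i - j) i
            = θ k (j+1) * b1 τ (j+1) := by
          rw [Finset.sum_eq_single_of_mem (j+1) (Finset.mem_Icc.2 ⟨le_refl _, hjk'⟩)]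
          · rw [show j + 1 - j = 1 by omega]
            simp [bker]
          · intro i hi hne
            obtain ⟨hi1, hi2⟩ := Finset.mem_Icc.1 hi
            have e0 : ¬(i - j = 0) := by omega
            have e1 : ¬(i - j = 1) := by omega
            simp [bker, e0, e1]
        rw [recur, hsum, ih (j+1) (by omega) hjk' (by omega)]
        have hpj1 : p (j+1) = p j * d j := by
          have := hpstep (j+1) (by omega)
          simpa using this
        rw [hpj1]
        have hb0j : b0 τ j ≠ 0 := ne_of_gt (hb0 j h2 (by omega))
        have hb0k : b0 τ k ≠ 0 := ne_of_gt (hb0 k hk2 hkN)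
        have hpj : p j ≠ 0 := ne_of_gt (hppos j (by omega))
        have hpk : p k ≠ 0 := ne_of_gt (hppos k hkN)
        have hb1j : b1 τ (j+1) ≠ 0 := ne_of_lt (hb1 (j+1) (by omega) (by omega))
        have hdj : d j = -(b1 τ (j+1)) / b0 τ j := rfl
        rw [hdj]
        field_simp
    exact fun j h2 hj => key (k-j) j h2 hj rfl
  -- rewrite the quadratic form termwise
  have hinner : ∀ k ∈ Finset.Icc 2 n,
      w k * ∑ j ∈ Finset.Icc 2 k, θ k j * w j
        = b0 τ k * u k ^ 2 + b1 τ k * (u k * u (k-1)) := by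
    intro k hk
    obtain ⟨hk2, hkn⟩ := Finset.mem_Icc.1 hk
    have hkN : k ≤ N := hkn.trans hnN
    have hpk := hppos k hkN
    have hb0k := hb0 k hk2 hkN
    have h1 : ∑ j ∈ Finset.Icc 2 k, θ k j * w j = p k / b0 τ k * S k := by
      simp only [hSdef, Finset.mul_sum]
      apply Finset.sum_congr rfl
      intro j hj
      obtain ⟨hj2, hjk⟩ := Finset.mem_Icc.1 hj
      rw [hθcf k hk2 hkn j hj2 hjk]
      ring
    rw [h1]
    have hSs := hSstep k hk2
    have hwk : w k = p k * (S k - S (k-1)) := by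
      have : w k / p k = S k - S (k-1) := by linarith
      rw [← this]
      field_simp
    rcases eq_or_lt_of_le hk2 with heq | hlt
    · subst heq
      rw [hwk]
      simp only [hu, show (2:ℕ)-1 = 1 from rfl, hS1, sub_zero, mul_zero]
      field_simp
      ring
    · have h3 : 3 ≤ k := hlt
      have hpk' : p k = p (k-1) * d (k-1) := hpstep k h3
      have hdk : d (k-1) = -(b1 τ ((k-1)+1)) / b0 τ (k-1) := rfl
      have hk1 : k - 1 + 1 = k := by omega
      rw [hk1] at hdk
      have hb0k1 : b0 τ (k-1) ≠ 0 := ne_of_gt (hb0 (k-1) (by omega) (by omega))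
      have hpk1 : p (k-1) ≠ 0 := ne_of_gt (hppos (k-1) (by omega))
      rw [hwk]
      simp only [hu]
      rw [hpk', hdk]
      field_simp
      ring
  rw [Finset.sum_congr rfl hinner]
  -- square root setup
  set σ := Real.sqrt rstar with hσdef
  set c := Real.sqrt ruser with hcdef
  have hσ0 : 0 < σ := Real.sqrt_pos.2 hrstar_pos
  have hc0 : 0 < c := Real.sqrt_pos.2 hruser_pos
  have hσ3 : σ^3 = 1 + 2*σ^2 := by
    have h1 : rstar ^ ((3:ℝ)/2) = σ^3 := doc_rpow_three_halves hrstar_pos.le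
    have h2 : σ^2 = rstar := Real.sq_sqrt hrstar_pos.le
    rw [h2]; linarith
  have hcσ : c < σ := Real.sqrt_lt_sqrt hruser_pos.le hru
  set t : ℕ → ℝ := fun k => Real.sqrt (ratio τ k) with htdef
  have ht0 : ∀ k, 2 ≤ k → k ≤ N → 0 < t k := fun k h2 hk => Real.sqrt_pos.2 (hrpos k h2 hk)
  have ht2 : ∀ k, 2 ≤ k → k ≤ N → t k ^ 2 = ratio τ k :=
    fun k h2 hk => Real.sq_sqrt (hrpos k h2 hk).le
  have htc : ∀ k, 2 ≤ k → k ≤ N → t k ≤ c :=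
    fun k h2 hk => Real.sqrt_le_sqrt (hr k h2 hk).2
  set A : ℕ → ℝ := fun k => (2 + 4*(t k)^2 - (t k)^3) / (2 * τ k * (1 + (t k)^2)) with hA
  set Bc : ℕ → ℝ := fun k => (t k)^5 / (2 * τ k * (1 + (t k)^2)) with hB
  have hcore : ∀ k, 2 ≤ k → k ≤ N → ∀ k', 2 ≤ k' → k' ≤ N →
      (t k')^3 * (1 + (t k)^2) < (2 + 4*(t k)^2 - (t k)^3) * (1 + (t k')^2) :=
    fun k h2 hk k' h2' hk' =>
      doc_core σ c (t k) (t k') hσ0 hσ3 hcσ (ht0 k h2 hk) (htc k h2 hk)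
        (ht0 k' h2' hk') (htc k' h2' hk')
  have hApos : ∀ k, 2 ≤ k → k ≤ N → 0 < A k := by
    intro k h2 hk
    have h := hcore k h2 hk k h2 hk
    have ht := ht0 k h2 hk
    have hτk := hτ k (by omega) hk
    apply div_pos _ (by positivity)
    nlinarith [pow_pos ht 3, sq_nonneg (t k)]
  have hAB : ∀ k, 2 ≤ k → k + 1 ≤ N → Bc (k+1) < A k := by
    intro k h2 hk1
    have hτk := hτ k (by omega) (by omega)
    have hτk1 := hτ (k+1) (by omega) hk1
    have hra : ratio τ (k+1) = (t (k+1))^2 := (ht2 (k+1) (by omega) hk1).symm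
    have hτstep : τ (k+1) = (t (k+1))^2 * τ k := by
      rw [← hra]; unfold ratio; rw [Nat.add_sub_cancel]; field_simp
    have hcorek := hcore k h2 (by omega) (k+1) (by omega) hk1
    have ht := ht0 k h2 (by omega)
    have ht1 := ht0 (k+1) (by omega) hk1
    simp only [hA, hB]
    rw [div_lt_div_iff₀ (by positivity) (by positivity), hτstep]
    nlinarith [mul_lt_mul_of_pos_left hcorek
      (by positivity : (0:ℝ) < 2*(t (k+1))^2*τ k)]
  -- pointwise lower bound
  have hbound : ∀ k ∈ Finset.Icc 2 n,
      A k * u k ^ 2 - Bc k * u (k-1) ^ 2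
        ≤ b0 τ k * u k ^ 2 + b1 τ k * (u k * u (k-1)) := by
    intro k hk
    obtain ⟨hk2, hkn⟩ := Finset.mem_Icc.1 hk
    have hkN : k ≤ N := hkn.trans hnN
    have hτk := hτ k (by omega) hkN
    have htk := ht0 k hk2 hkN
    have ht2k := ht2 k hk2 hkN
    have hb0e : b0 τ k = (1 + 2*(t k)^2) / (τ k * (1 + (t k)^2)) := by
      unfold b0; rw [← ht2k]
    have hb1e : b1 τ k = -((t k)^2)^2 / (τ k * (1 + (t k)^2)) := by
      unfold b1; rw [← ht2k]
    rw [hb0e, hb1e]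
    simp only [hA, hB]
    rw [← sub_nonneg]
    have hkey : (1 + 2*(t k)^2) / (τ k * (1 + (t k)^2)) * u k ^ 2
        + -((t k)^2)^2 / (τ k * (1 + (t k)^2)) * (u k * u (k-1))
        - ((2 + 4*(t k)^2 - (t k)^3) / (2 * τ k * (1 + (t k)^2)) * u k ^ 2
          - (t k)^5 / (2 * τ k * (1 + (t k)^2)) * u (k-1) ^ 2)
        = (t k)^3 * (u k - t k * u (k-1))^2 / (2 * τ k * (1 + (t k)^2)) := by
      field_simp
      ring
    rw [hkey]
    positivity
  have hsum1 : ∑ k ∈ Finset.Icc 2 n, (A k * u k ^ 2 - Bc k * u (k-1) ^ 2)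
      ≤ ∑ k ∈ Finset.Icc 2 n, (b0 τ k * u k ^ 2 + b1 τ k * (u k * u (k-1))) :=
    Finset.sum_le_sum hbound
  -- reindex and split
  obtain ⟨m, rfl⟩ : ∃ m, n = m + 1 := ⟨n-1, by omega⟩
  have hm : 1 ≤ m := by omega
  have hTB : ∑ k ∈ Finset.Icc 2 (m+1), Bc k * u (k-1) ^ 2
      = ∑ k ∈ Finset.Icc 2 m, Bc (k+1) * u k ^ 2 := by
    rw [show (2:ℕ) = 1 + 1 from rfl, ← Finset.map_add_right_Icc 1 m 1, Finset.sum_map]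
    simp only [addRightEmbedding_apply, Nat.add_sub_cancel]
    have hins : Finset.Icc 1 m = insert 1 (Finset.Icc 2 m) := by
      ext x
      simp only [Finset.mem_Icc, Finset.mem_insert]
      omega
    rw [hins, Finset.sum_insert (by simp)]
    rw [hu1]
    ring_nf
  have hTA : ∑ k ∈ Finset.Icc 2 (m+1), A k * u k ^ 2
      = ∑ k ∈ Finset.Icc 2 m, A k * u k ^ 2 + A (m+1) * u (m+1) ^ 2 :=
    Finset.sum_Icc_succ_top (by omega) _
  have hsplit : ∑ k ∈ Finset.Icc 2 (m+1), (A k * u k ^ 2 - Bc k * u (k-1) ^ 2)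
      = ∑ k ∈ Finset.Icc 2 m, (A k - Bc (k+1)) * u k ^ 2 + A (m+1) * u (m+1) ^ 2 := by
    rw [Finset.sum_sub_distrib, hTA, hTB]
    rw [show ∀ X Y G : ℝ, X + G - Y = (X - Y) + G from fun X Y G => by ring]
    rw [← Finset.sum_sub_distrib]
    congr 1
    apply Finset.sum_congr rfl
    intro k hk
    ring
  -- existence of nonzero u
  have hexu : ∃ k0, 2 ≤ k0 ∧ k0 ≤ m+1 ∧ u k0 ≠ 0 := by
    by_contra hcon
    push_neg at hcon
    have hSz : ∀ k0, 2 ≤ k0 → k0 ≤ m+1 → S k0 = 0 := by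
      intro k0 h2 hk0
      have hzz := hcon k0 h2 hk0
      have hfac : p k0 / b0 τ k0 ≠ 0 :=
        div_ne_zero (ne_of_gt (hppos k0 (by omega))) (ne_of_gt (hb0 k0 h2 (by omega)))
      simp only [hu] at hzz
      rcases mul_eq_zero.1 hzz with h | h
      · exact absurd h hfac
      · exact h
    obtain ⟨k0, h2, hk0, hwk0⟩ := hw
    apply hwk0
    have hSs := hSstep k0 h2
    have hS0 : S (k0 - 1) = 0 := by
      rcases eq_or_lt_of_le h2 with heq | hlt
      · rw [← heq]; exact hS1
      · exact hSz (k0-1) (by omega) (by omega)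
    have hwp : w k0 / p k0 = 0 := by
      rw [hSz k0 h2 hk0, hS0] at hSs
      linarith
    have hpk0 : p k0 ≠ 0 := ne_of_gt (hppos k0 (by omega))
    field_simp at hwp
    simpa using hwp
  obtain ⟨k0, h2, hk0, huk0⟩ := hexu
  -- final positivity
  have hterm_nonneg : ∀ k ∈ Finset.Icc 2 m, 0 ≤ (A k - Bc (k+1)) * u k ^ 2 := by
    intro k hk
    obtain ⟨hk2, hkm⟩ := Finset.mem_Icc.1 hk
    exact mul_nonneg (sub_pos.2 (hAB k hk2 (by omega))).le (sq_nonneg _)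
  have hG_nonneg : 0 ≤ A (m+1) * u (m+1) ^ 2 :=
    mul_nonneg (hApos (m+1) (by omega) (by omega)).le (sq_nonneg _)
  have huk0sq : 0 < u k0 ^ 2 :=
    lt_of_le_of_ne (sq_nonneg _) (Ne.symm (pow_ne_zero 2 huk0))
  have hfinal : 0 < ∑ k ∈ Finset.Icc 2 m, (A k - Bc (k+1)) * u k ^ 2
      + A (m+1) * u (m+1) ^ 2 := by
    rcases eq_or_lt_of_le hk0 with heq | hlt
    · subst heq
      have hGpos : 0 < A (m+1) * u (m+1) ^ 2 := mul_pos (hApos (m+1) h2 (by omega)) huk0sq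
      have := Finset.sum_nonneg hterm_nonneg
      linarith
    · have hk0m : k0 ≤ m := by omega
      have hmem : k0 ∈ Finset.Icc 2 m := Finset.mem_Icc.2 ⟨h2, hk0m⟩
      have hsingle : (A k0 - Bc (k0+1)) * u k0 ^ 2
          ≤ ∑ k ∈ Finset.Icc 2 m, (A k - Bc (k+1)) * u k ^ 2 :=
        Finset.single_le_sum hterm_nonneg hmem
      have hpos : 0 < (A k0 - Bc (k0+1)) * u k0 ^ 2 :=
        mul_pos (sub_pos.2 (hAB k0 h2 (by omega))) huk0sq
      linarith
  calc 0 < ∑ k ∈ Finset.Icc 2 m, (A k - Bc (k+1)) * u k ^ 2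
      + A (m+1) * u (m+1) ^ 2 := hfinal
    _ = ∑ k ∈ Finset.Icc 2 (m+1), (A k * u k ^ 2 - Bc k * u (k-1) ^ 2) := hsplit.symm
    _ ≤ _ := hsum1
end

section
/- Let N ≥ 2 and let positive step sizes τ_1,…,τ_N be given with step ratios r_k := τ_k/τ_{k-1} satisfying the condition S0 (0 < r_k ≤ r_user for all 2 ≤ k ≤ N, for some r_user < r_* ≈ 4.864, the positive root of 1+2r−r^{3/2}=0). Then for every n with 2 ≤ n ≤ N: (i) Σ_{j=2}^{n} θ_{n-j}^{(n)} ≤ τ_n, and consequently (ii) Σ_{k=2}^{n} Σ_{j=2}^{k} θ_{k-j}^{(k)} ≤ t_n, where t_n := τ_1 + ⋯ + τ_n. -/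
theorem doc_kernels_row_sum_bound
    (N : ℕ) (hN : 2 ≤ N) (τ : ℕ → ℝ)
    (hτ : ∀ k, 1 ≤ k → k ≤ N → 0 < τ k)
    (ruser rstar : ℝ) (hruser_pos : 0 < ruser)
    (hrstar_pos : 0 < rstar)
    (hrstar_root : 1 + 2 * rstar - rstar ^ ((3 : ℝ) / 2) = 0)
    (hru : ruser < rstar)
    (hr : ∀ k, 2 ≤ k → k ≤ N → 0 < ratio τ k ∧ ratio τ k ≤ ruser)
    (θ : ℕ → ℕ → ℝ)
    (hθdiag : ∀ n, 2 ≤ n → θ n n = 1 / b0 τ n)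
    (hθrec : ∀ n k, 2 ≤ k → k < n →
      θ n k = -(1 / b0 τ k) * ∑ j ∈ Finset.Icc (k + 1) n, θ n j * bker τ (j - k) j)
    (n : ℕ) (hn : 2 ≤ n) (hnN : n ≤ N) :
    (∑ j ∈ Finset.Icc 2 n, θ n j ≤ τ n) ∧
      ∑ k ∈ Finset.Icc 2 n, ∑ j ∈ Finset.Icc 2 k, θ k j ≤ ∑ i ∈ Finset.Icc 1 n, τ i := by
  -- positivity of ratios
  have hrpos : ∀ k, 2 ≤ k → k ≤ N → 0 < ratio τ k := fun k h1 h2 => (hr k h1 h2).1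
  -- the diagonal value
  have hdiagval : ∀ m, 2 ≤ m → m ≤ N →
      θ m m = τ m * (1 + ratio τ m) / (1 + 2 * ratio τ m) := by
    intro m hm hmN
    have hrm := hrpos m hm hmN
    have hτm := hτ m (by omega) hmN
    rw [hθdiag m hm, b0]
    rw [one_div_div]
  -- the simplified recursion
  have hstep : ∀ m k, 2 ≤ k → k < m → m ≤ N →
      θ m k = ratio τ (k+1) * (1 + ratio τ k) /
        ((1 + ratio τ (k+1)) * (1 + 2 * ratio τ k)) * θ m (k+1) := by
    intro m k hk hkm hmN
    have hk1m : k + 1 ≤ m := hkm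
    have hsum : ∑ j ∈ Finset.Icc (k + 1) m, θ m j * bker τ (j - k) j
        = θ m (k+1) * b1 τ (k+1) := by
      rw [Finset.sum_eq_single_of_mem (k+1) (Finset.mem_Icc.2 ⟨le_refl _, hk1m⟩)]
      · have h1 : k + 1 - k = 1 := by omega
        simp [bker, h1]
      · intro j hj hne
        have hj' := Finset.mem_Icc.1 hj
        have h0 : j - k ≠ 0 := by omega
        have h1 : j - k ≠ 1 := by omega
        simp [bker, h0, h1]
    rw [hθrec m k hk hkm, hsum]
    have hr1 := hrpos k hk (by omega)
    have hr2 := hrpos (k+1) (by omega) (by omega)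
    have hτk := hτ k (by omega) (by omega)
    have hτk1 : τ (k+1) = ratio τ (k+1) * τ k := by
      have : (k + 1) - 1 = k := by omega
      rw [ratio, this]
      field_simp
    rw [b0, b1, hτk1]
    have h1 : (1 : ℝ) + ratio τ k ≠ 0 := by positivity
    have h2 : (1 : ℝ) + 2 * ratio τ k ≠ 0 := by positivity
    have h3 : (1 : ℝ) + ratio τ (k+1) ≠ 0 := by positivity
    have h4 : ratio τ (k+1) ≠ 0 := ne_of_gt hr2
    have h5 : τ k ≠ 0 := ne_of_gt hτk
    field_simp
  -- positivity of θ
  have hθpos : ∀ m, 2 ≤ m → m ≤ N → ∀ d j, 2 ≤ j → j ≤ m → m - j ≤ d → 0 < θ m j := by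
    intro m hm hmN d
    induction d with
    | zero =>
      intro j hj hjm hd
      have : j = m := by omega
      subst this
      rw [hdiagval j hj hmN]
      have hr1 := hrpos j hj hmN
      have hτ1 := hτ j (by omega) hmN
      positivity
    | succ d ih =>
      intro j hj hjm hd
      by_cases hjm' : j = m
      · subst hjm'
        rw [hdiagval j hj hmN]
        have hr1 := hrpos j hj hmN
        have hτ1 := hτ j (by omega) hmN
        positivity
      · have hjm2 : j < m := by omega
        rw [hstep m j hj hjm2 hmN]
        have hr1 := hrpos j hj (by omega)
        have hr2 := hrpos (j+1) (by omega) (by omega)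
        have hprev := ih (j+1) (by omega) (by omega) (by omega)
        positivity
  -- the key invariant
  have hinv : ∀ m, 2 ≤ m → m ≤ N → ∀ k, 2 ≤ k → k + 1 ≤ m →
      ∑ j ∈ Finset.Icc 2 k, θ m j ≤
        ratio τ (k+1) / (1 + ratio τ (k+1)) * θ m (k+1) := by
    intro m hm hmN k hk
    induction k, hk using Nat.le_induction with
    | base =>
      intro h3m
      rw [Finset.Icc_self, Finset.sum_singleton, hstep m 2 (le_refl 2) (by omega) hmN]
      have hr2 := hrpos 2 (le_refl 2) (by omega)
      have hr3 := hrpos 3 (by omega) (by omega)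
      have hθ3 := hθpos m hm hmN m 3 (by omega) (by omega) (by omega)
      have hcoef : ratio τ 3 * (1 + ratio τ 2) / ((1 + ratio τ 3) * (1 + 2 * ratio τ 2))
          ≤ ratio τ 3 / (1 + ratio τ 3) := by
        rw [div_le_div_iff₀ (by positivity) (by positivity)]
        nlinarith [mul_pos hr3 hr2, mul_pos (mul_pos hr3 hr2) hr2]
      exact mul_le_mul_of_nonneg_right hcoef (le_of_lt hθ3)
    | succ k hk ih =>
      intro hk2m
      have hk1m : k + 1 ≤ m := by omega
      have hr1 := hrpos (k+1) (by omega) (by omega)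
      have hr2 := hrpos (k+2) (by omega) (by omega)
      rw [Finset.sum_Icc_succ_top (by omega : 2 ≤ k + 1)]
      have hθk2 := hθpos m hm hmN m (k+2) (by omega) (by omega) (by omega)
      have step1 : ∑ j ∈ Finset.Icc 2 k, θ m j + θ m (k+1) ≤
          ratio τ (k+1) / (1 + ratio τ (k+1)) * θ m (k+1) + θ m (k+1) := by
        have := ih hk1m
        linarith
      refine le_trans step1 ?_
      rw [hstep m (k+1) (by omega) (by omega) hmN]
      have h1 : (1 : ℝ) + ratio τ (k+1) ≠ 0 := by positivity
      have h2 : (1 : ℝ) + 2 * ratio τ (k+1) ≠ 0 := by positivity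
      have h3 : (1 : ℝ) + ratio τ (k+2) ≠ 0 := by positivity
      have heq : ratio τ (k+1) / (1 + ratio τ (k+1)) *
            (ratio τ (k+1+1) * (1 + ratio τ (k+1)) /
              ((1 + ratio τ (k+1+1)) * (1 + 2 * ratio τ (k+1))) * θ m (k+1+1)) +
          ratio τ (k+1+1) * (1 + ratio τ (k+1)) /
              ((1 + ratio τ (k+1+1)) * (1 + 2 * ratio τ (k+1))) * θ m (k+1+1)
          = ratio τ (k+1+1) / (1 + ratio τ (k+1+1)) * θ m (k+1+1) := by
        have hkk : k + 1 + 1 = k + 2 := rfl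
        rw [hkk]
        field_simp
        ring
      rw [heq]
  -- row sum bound
  have rowsum : ∀ m, 2 ≤ m → m ≤ N → ∑ j ∈ Finset.Icc 2 m, θ m j ≤ τ m := by
    intro m hm hmN
    have hrm := hrpos m hm hmN
    have hτm := hτ m (by omega) hmN
    rcases eq_or_lt_of_le hm with heq | hlt
    · subst heq
      rw [Finset.Icc_self, Finset.sum_singleton, hdiagval 2 (le_refl 2) hmN]
      rw [div_le_iff₀ (by positivity)]
      nlinarith
    · obtain ⟨p, rfl⟩ : ∃ p, m = p + 1 := ⟨m - 1, by omega⟩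
      have hp : 2 ≤ p := by omega
      rw [Finset.sum_Icc_succ_top (by omega : 2 ≤ p + 1)]
      have hI := hinv (p+1) hm hmN p hp (le_refl _)
      have hd := hdiagval (p+1) hm hmN
      have h1 : (1 : ℝ) + ratio τ (p+1) ≠ 0 := by positivity
      have h2 : (1 : ℝ) + 2 * ratio τ (p+1) ≠ 0 := by positivity
      have : ratio τ (p+1) / (1 + ratio τ (p+1)) * θ (p+1) (p+1) + θ (p+1) (p+1) = τ (p+1) := by
        rw [hd]
        field_simp
        ring
      linarith
  constructor
  · exact rowsum n hn hnN
  · have h1 : ∑ k ∈ Finset.Icc 2 n, ∑ j ∈ Finset.Icc 2 k, θ k j ≤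
        ∑ k ∈ Finset.Icc 2 n, τ k := by
      apply Finset.sum_le_sum
      intro k hk
      have hk' := Finset.mem_Icc.1 hk
      exact rowsum k hk'.1 (le_trans hk'.2 hnN)
    refine le_trans h1 ?_
    apply Finset.sum_le_sum_of_subset_of_nonneg
    · exact Finset.Icc_subset_Icc_left (by omega)
    · intro i hi _
      have hi' := Finset.mem_Icc.1 hi
      exact le_of_lt (hτ i hi'.1 (le_trans hi'.2 hnN))
end

section
/- Let N ≥ 2 and let positive step sizes τ_1,…,τ_N be given with step ratios r_k := τ_k/τ_{k-1}. For any real sequence v^0, v^1, …, v^N, define the BDF2 difference D_2 v^j := b_0^{(j)}(v^j − v^{j-1}) + b_1^{(j)}(v^{j-1} − v^{j-2}) for j ≥ 2. Then for every n with 2 ≤ n ≤ N, Σ_{j=2}^{n} θ_{n-j}^{(n)} D_2 v^j = θ_{n-2}^{(n)} b_1^{(2)} (v^1 − v^0) + (v^n − v^{n-1}). -/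
theorem doc_action_on_bdf2_difference
    (N : ℕ) (hN : 2 ≤ N) (τ : ℕ → ℝ)
    (hτ : ∀ k, 1 ≤ k → k ≤ N → 0 < τ k)
    (θ : ℕ → ℕ → ℝ)
    (hθdiag : ∀ n, 2 ≤ n → θ n n = 1 / b0 τ n)
    (hθrec : ∀ n k, 2 ≤ k → k < n →
      θ n k = -(1 / b0 τ k) * ∑ j ∈ Finset.Icc (k + 1) n, θ n j * bker τ (j - k) j)
    (v : ℕ → ℝ) (n : ℕ) (hn : 2 ≤ n) (hnN : n ≤ N) :
    ∑ j ∈ Finset.Icc 2 n,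
        θ n j * (b0 τ j * (v j - v (j - 1)) + b1 τ j * (v (j - 1) - v (j - 2)))
      = θ n 2 * b1 τ 2 * (v 1 - v 0) + (v n - v (n - 1)) := by
  have hb0pos : ∀ k, 2 ≤ k → k ≤ N → 0 < b0 τ k := by
    intro k hk hkN
    have h1 : 0 < τ k := hτ k (by omega) hkN
    have h2 : 0 < τ (k - 1) := hτ (k - 1) (by omega) (by omega)
    have hr : 0 < ratio τ k := div_pos h1 h2
    unfold b0
    positivity
  have key : ∀ k, 2 ≤ k → k < n →
      θ n k * b0 τ k + θ n (k + 1) * b1 τ (k + 1) = 0 := by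
    intro k hk hkn
    have hrec := hθrec n k hk hkn
    have hS : ∑ j ∈ Finset.Icc (k + 1) n, θ n j * bker τ (j - k) j
        = θ n (k + 1) * b1 τ (k + 1) := by
      rw [Finset.sum_eq_single_of_mem (k + 1)]
      · have : (k + 1) - k = 1 := by omega
        simp [bker, this]
      · simp [Finset.mem_Icc]; omega
      · intro j hj hne
        have hj' := Finset.mem_Icc.mp hj
        have h1 : j - k ≠ 0 := by omega
        have h2 : j - k ≠ 1 := by omega
        simp [bker, h1, h2]
    have hb0 : b0 τ k ≠ 0 := ne_of_gt (hb0pos k hk (by omega))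
    rw [hrec, hS]
    field_simp
    ring
  have main : ∀ d k, 2 ≤ k → k + d = n →
      ∑ j ∈ Finset.Icc k n,
          θ n j * (b0 τ j * (v j - v (j - 1)) + b1 τ j * (v (j - 1) - v (j - 2)))
        = θ n k * b1 τ k * (v (k - 1) - v (k - 2)) + (v n - v (n - 1)) := by
    intro d
    induction d with
    | zero =>
      intro k hk hkn
      have hkn' : k = n := by omega
      subst hkn'
      rw [Finset.Icc_self, Finset.sum_singleton]
      have hb0 : b0 τ k ≠ 0 := ne_of_gt (hb0pos k hk (by omega))
      rw [hθdiag k hk]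
      field_simp
      ring
    | succ d ih =>
      intro k hk hkn
      have hins : Finset.Icc k n = insert k (Finset.Icc (k + 1) n) := by
        ext x
        simp [Finset.mem_Icc, Finset.mem_insert]
        omega
      rw [hins, Finset.sum_insert (by simp [Finset.mem_Icc])]
      rw [ih (k + 1) (by omega) (by omega)]
      have hkey := key k hk (by omega)
      have e1 : k + 1 - 1 = k := rfl
      have e2 : k + 1 - 2 = k - 1 := rfl
      rw [e1, e2]
      have hb1 : θ n (k + 1) * b1 τ (k + 1) = -(θ n k * b0 τ k) := by linarith
      rw [hb1]
      ring
  have := main (n - 2) 2 le_rfl (by omega)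
  exact this
end

section
/- For every r_user with 0 < r_user < r_* (r_* ≈ 4.864 the positive root of 1+2r−r^{3/2}=0) there exists a constant c > 0, depending only on r_user, with the following property: for every N ≥ 2, every family of positive step sizes τ_1,…,τ_N whose step ratios satisfy 0 < r_k ≤ r_user for 2 ≤ k ≤ N, every n with 2 ≤ n ≤ N, and every real sequence v_2,…,v_n, one has 2 Σ_{k=2}^{n} Σ_{j=2}^{k} θ_{k-j}^{(k)} v_j v_k ≥ c Σ_{k=2}^{n} τ_k v_k². -/
open Finset

lemma tri_swap (F : ℕ → ℕ → ℝ) (n : ℕ) (hn : 2 ≤ n) :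
    ∑ k ∈ Icc 2 n, ∑ j ∈ Icc 2 k, F k j = ∑ j ∈ Icc 2 n, ∑ k ∈ Icc j n, F k j := by
  induction n, hn using Nat.le_induction with
  | base => simp
  | succ n hn ih =>
    rw [Finset.sum_Icc_succ_top (by omega : 2 ≤ n + 1), ih,
      Finset.sum_Icc_succ_top (by omega : 2 ≤ n + 1)
        (fun j => ∑ k ∈ Icc j (n+1), F k j)]
    have h1 : ∀ j ∈ Icc 2 n, ∑ k ∈ Icc j (n+1), F k j
        = (∑ k ∈ Icc j n, F k j) + F (n+1) j := by
      intro j hj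
      simp only [mem_Icc] at hj
      exact Finset.sum_Icc_succ_top (by omega) _
    rw [Finset.sum_congr rfl h1, Finset.sum_add_distrib,
      Finset.sum_Icc_succ_top (by omega : 2 ≤ n + 1) (fun j => F (n+1) j),
      Finset.Icc_self, Finset.sum_singleton]
    ring

lemma hu_pos (ruser rstar : ℝ) (hruser_pos : 0 < ruser) (hrstar_pos : 0 < rstar)
    (hrstar_root : 1 + 2 * rstar - rstar ^ ((3 : ℝ) / 2) = 0) (hru : ruser < rstar) :
    0 < 1 + 2 * ruser - ruser * Real.sqrt ruser := by
  set su := Real.sqrt ruser with hsud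
  set t := Real.sqrt rstar with htd
  have hsupos : 0 < su := Real.sqrt_pos.mpr hruser_pos
  have hsu2 : su ^ 2 = ruser := Real.sq_sqrt hruser_pos.le
  have htpos : 0 < t := Real.sqrt_pos.mpr hrstar_pos
  have ht2 : t ^ 2 = rstar := Real.sq_sqrt hrstar_pos.le
  have hrw : rstar ^ ((3:ℝ)/2) = rstar * t := by
    rw [show (3:ℝ)/2 = 1 + 1/2 by norm_num, Real.rpow_add hrstar_pos, Real.rpow_one,
      ← Real.sqrt_eq_rpow]
  have hroot : t ^ 3 = 1 + 2 * t ^ 2 := by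
    have h1 : rstar * t = 1 + 2 * rstar := by rw [hrw] at hrstar_root; linarith
    nlinarith [h1, ht2]
  have hst : su < t := by
    by_contra h
    push_neg at h
    nlinarith
  have ht2' : 2 < t := by nlinarith [htpos]
  rcases le_or_gt su 2 with h | h
  · nlinarith [mul_nonneg (sq_nonneg su) (by linarith : (0:ℝ) ≤ 2 - su)]
  · nlinarith [mul_lt_mul_of_pos_left hst (by nlinarith : (0:ℝ) < su^2),
      mul_lt_mul_of_pos_right (by nlinarith : su^2 < t^2) (by linarith : (0:ℝ) < t - 2)]

lemma key1' (ru su M : ℝ) (hru : 0 < ru) (hsupos : 0 < su) (hsu2 : su^2 = ru)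
    (hM : M = ru * su / (1 + ru)) :
    ∀ s : ℝ, 0 < s → s^2 ≤ ru → s^2*s/(1+s^2) ≤ M := by
  intro s hs hsru
  have h1 : (0:ℝ) < 1 + s^2 := by positivity
  have h2 : (0:ℝ) < 1 + ru := by linarith
  have hssu : s ≤ su := by nlinarith [sq_nonneg (s - su)]
  rw [hM, div_le_div_iff₀ h1 h2]
  nlinarith [mul_le_mul_of_nonneg_right hssu (by positivity : (0:ℝ) ≤ s^2),
    mul_le_mul_of_nonneg_right hsru (by positivity : (0:ℝ) ≤ su),
    mul_le_mul_of_nonneg_right (mul_le_mul_of_nonneg_right hssu (by positivity : (0:ℝ) ≤ s^2)) hru.le]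

lemma key2' (ru su M c1 : ℝ) (hru : 0 < ru) (hsupos : 0 < su) (hsu2 : su^2 = ru)
    (hM : M = ru * su / (1 + ru))
    (hc1pos : 0 < c1)
    (hc1a : c1 + c1 ≤ 2 - M)
    (hc1b : c1 * (1 + ru) ≤ 1 + 2*ru - ru*su) :
    ∀ s : ℝ, 0 < s → s^2 ≤ ru → (M + c1) * (1 + s^2) ≤ 2 + 4*s^2 - s^2*s := by
  intro s hs hsru
  have h2 : (0:ℝ) < 1 + ru := by linarith
  have hssu : s ≤ su := by nlinarith [sq_nonneg (s - su)]
  have hs3 : s^2*s ≤ su * s^2 := by nlinarith [sq_nonneg s]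
  have hMr : M * (1 + ru) = ru * su := by rw [hM]; field_simp
  have hend : 0 ≤ 2 + 4*ru - su*ru - (M + c1) * (1 + ru) := by nlinarith
  have h0 : 0 ≤ 2 - (M + c1) := by
    have hM0 : 0 ≤ M := by rw [hM]; positivity
    nlinarith
  nlinarith [mul_nonneg (by linarith [hsru] : (0:ℝ) ≤ ru - s^2) h0,
    mul_nonneg (by positivity : (0:ℝ) ≤ s^2) hend, hru]

lemma hstep' (ru su M c1 : ℝ) (hru : 0 < ru) (hsupos : 0 < su) (hsu2 : su^2 = ru)
    (hM : M = ru * su / (1 + ru))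
    (hc1pos : 0 < c1)
    (hc1a : c1 + c1 ≤ 2 - M)
    (hc1b : c1 * (1 + ru) ≤ 1 + 2*ru - ru*su) :
    ∀ s τp uu uu' : ℝ, 0 < s → s^2 ≤ ru → 0 < τp →
      -(M * (uu^2 / τp)) + (c1+M) * (uu'^2 / (s^2*τp)) ≤
      2*((1+2*s^2)/((s^2*τp)*(1+s^2)))*uu'^2
        + 2*(-((s^2)^2)/((s^2*τp)*(1+s^2)))*(uu*uu') := by
  intro s τp uu uu' hs hsru hτp
  have h1 : (0:ℝ) < 1 + s^2 := by positivity
  have hA : 0 ≤ M - s^2*s/(1+s^2) := by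
    have := key1' ru su M hru hsupos hsu2 hM s hs hsru
    linarith
  have hB : 0 ≤ (2 + 4*s^2 - s^2*s)/(1+s^2) - (c1+M) := by
    rw [sub_nonneg, le_div_iff₀ h1]
    have := key2' ru su M c1 hru hsupos hsu2 hM hc1pos hc1a hc1b s hs hsru
    linarith
  rw [← sub_nonneg]
  have hident : 2*((1+2*s^2)/((s^2*τp)*(1+s^2)))*uu'^2
        + 2*(-((s^2)^2)/((s^2*τp)*(1+s^2)))*(uu*uu')
        - (-(M * (uu^2 / τp)) + (c1+M) * (uu'^2 / (s^2*τp)))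
      = (M - s^2*s/(1+s^2))/τp * uu^2
        + ((2 + 4*s^2 - s^2*s)/(1+s^2) - (c1+M))/(s^2*τp) * uu'^2
        + s/(τp*(1+s^2)) * (s*uu - uu')^2 := by
    field_simp
    ring
  rw [hident]
  have t1 : 0 ≤ (M - s^2*s/(1+s^2))/τp * uu^2 :=
    mul_nonneg (div_nonneg hA hτp.le) (sq_nonneg _)
  have t2 : 0 ≤ ((2 + 4*s^2 - s^2*s)/(1+s^2) - (c1+M))/(s^2*τp) * uu'^2 :=
    mul_nonneg (div_nonneg hB (by positivity)) (sq_nonneg _)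
  have t3 : 0 ≤ s/(τp*(1+s^2)) * (s*uu - uu')^2 := by positivity
  linarith

set_option maxHeartbeats 1000000 in
theorem doc_quadratic_form_lower_bound
    (ruser rstar : ℝ) (hruser_pos : 0 < ruser)
    (hrstar_pos : 0 < rstar)
    (hrstar_root : 1 + 2 * rstar - rstar ^ ((3 : ℝ) / 2) = 0)
    (hru : ruser < rstar) :
    ∃ c : ℝ, 0 < c ∧
      ∀ (N : ℕ), 2 ≤ N → ∀ τ : ℕ → ℝ,
        (∀ k, 1 ≤ k → k ≤ N → 0 < τ k) →
        (∀ k, 2 ≤ k → k ≤ N → 0 < ratio τ k ∧ ratio τ k ≤ ruser) →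
        ∀ θ : ℕ → ℕ → ℝ,
        (∀ n, 2 ≤ n → θ n n = 1 / b0 τ n) →
        (∀ n k, 2 ≤ k → k < n →
          θ n k = -(1 / b0 τ k) * ∑ j ∈ Finset.Icc (k + 1) n, θ n j * bker τ (j - k) j) →
        ∀ n, 2 ≤ n → n ≤ N → ∀ v : ℕ → ℝ,
          2 * ∑ k ∈ Finset.Icc 2 n, ∑ j ∈ Finset.Icc 2 k, θ k j * v j * v k
            ≥ c * ∑ k ∈ Finset.Icc 2 n, τ k * v k ^ 2 := by
  have hsupos : 0 < Real.sqrt ruser := Real.sqrt_pos.mpr hruser_pos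
  set su := Real.sqrt ruser with hsud
  have hsu2 : su ^ 2 = ruser := Real.sq_sqrt hruser_pos.le
  have hhu : 0 < 1 + 2 * ruser - ruser * su :=
    hu_pos ruser rstar hruser_pos hrstar_pos hrstar_root hru
  have hrp1 : (0:ℝ) < 1 + ruser := by linarith
  set M := ruser * su / (1 + ruser) with hMd
  have hM0 : 0 ≤ M := by rw [hMd]; positivity
  have hM2 : M < 2 := by rw [hMd, div_lt_iff₀ hrp1]; nlinarith
  set c1 := min (2 - M) (2*(1 + 2*ruser - ruser*su)/(1+ruser)) / 2 with hc1d
  have hc1pos : 0 < c1 := by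
    apply div_pos _ two_pos
    exact lt_min (by linarith) (by positivity)
  have hc1a : c1 + c1 ≤ 2 - M := by
    have h := min_le_left (2 - M) (2*(1 + 2*ruser - ruser*su)/(1+ruser))
    rw [hc1d]; linarith
  have hc1b : c1 * (1 + ruser) ≤ 1 + 2*ruser - ruser*su := by
    have h := min_le_right (2 - M) (2*(1 + 2*ruser - ruser*su)/(1+ruser))
    have e : (2*(1 + 2*ruser - ruser*su)/(1+ruser))/2
        = (1 + 2*ruser - ruser*su)/(1+ruser) := by ring
    have h2 : c1 ≤ (1 + 2*ruser - ruser*su)/(1+ruser) := by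
      rw [← e, hc1d]
      linarith
    calc c1 * (1+ruser) ≤ ((1 + 2*ruser - ruser*su)/(1+ruser)) * (1+ruser) :=
          mul_le_mul_of_nonneg_right h2 hrp1.le
      _ = 1 + 2*ruser - ruser*su := by field_simp
  have hstep := hstep' ruser su M c1 hruser_pos hsupos hsu2 hMd hc1pos hc1a hc1b
  refine ⟨c1 / (8 + 2*ruser^3), div_pos hc1pos (by positivity), ?_⟩
  intro N hN τ hτp hrat θ hθd hθr n hn2 hnN v
  have hτn : ∀ k, 1 ≤ k → k ≤ n → 0 < τ k := fun k h1 h2 => hτp k h1 (h2.trans hnN)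
  have hratn : ∀ k, 2 ≤ k → k ≤ n → 0 < ratio τ k ∧ ratio τ k ≤ ruser :=
    fun k h1 h2 => hrat k h1 (h2.trans hnN)
  have hb0pos : ∀ k, 2 ≤ k → k ≤ n → 0 < b0 τ k := by
    intro k h1 h2
    obtain ⟨hr1, hr2⟩ := hratn k h1 h2
    have hτk := hτn k (by omega) h2
    exact div_pos (by linarith) (by nlinarith)
  set u : ℕ → ℝ := fun k => ∑ j ∈ Icc k n, θ j k * v j with hud
  have hun1 : u (n+1) = 0 := by
    simp only [hud]
    rw [Finset.Icc_eq_empty (by omega)]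
    simp
  -- Lemma I : B^T u = v
  have hI : ∀ k, 2 ≤ k → k ≤ n → b0 τ k * u k + b1 τ (k+1) * u (k+1) = v k := by
    intro k hk2 hkn
    have hb0 := hb0pos k hk2 hkn
    have hsplit : Icc k n = insert k (Icc (k+1) n) := by
      ext x; simp only [mem_Icc, mem_insert]; omega
    have hknm : k ∉ Icc (k+1) n := by simp
    have hrow : ∀ j ∈ Icc (k+1) n, b0 τ k * (θ j k * v j)
        = -(b1 τ (k+1) * (θ j (k+1) * v j)) := by
      intro j hj
      simp only [mem_Icc] at hj
      have hrec := hθr j k hk2 (by omega)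
      have hsum : ∑ m ∈ Icc (k+1) j, θ j m * bker τ (m-k) m
          = θ j (k+1) * b1 τ (k+1) := by
        have hmem : k+1 ∈ Icc (k+1) j := by simp only [mem_Icc]; omega
        rw [Finset.sum_eq_single_of_mem (k+1) hmem ?_]
        · have h1 : k+1-k = 1 := by omega
          rw [h1]
          simp [bker]
        · intro m hm hne
          simp only [mem_Icc] at hm
          have h1 : m - k ≠ 0 := by omega
          have h2 : m - k ≠ 1 := by omega
          simp [bker, h1, h2]
      rw [hrec, hsum]
      field_simp
    have hthkk := hθd k hk2
    have hexp : b0 τ k * u k = v k + ∑ j ∈ Icc (k+1) n, b0 τ k * (θ j k * v j) := by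
      simp only [hud]
      rw [hsplit, Finset.sum_insert hknm, mul_add, Finset.mul_sum, hthkk]
      congr 1
      field_simp
    have hneg : ∑ j ∈ Icc (k+1) n, b0 τ k * (θ j k * v j)
        = -(b1 τ (k+1) * u (k+1)) := by
      rw [Finset.sum_congr rfl hrow]
      simp only [hud]
      rw [Finset.sum_neg_distrib, ← Finset.mul_sum]
    rw [hexp, hneg]
    ring
  -- Quadratic form identity
  have hQF : ∑ k ∈ Icc 2 n, ∑ j ∈ Icc 2 k, θ k j * v j * v k
      = ∑ k ∈ Icc 2 n, b0 τ k * (u k)^2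
        + ∑ k ∈ Ico 2 n, b1 τ (k+1) * u k * u (k+1) := by
    rw [tri_swap (fun k j => θ k j * v j * v k) n hn2]
    have e1 : ∀ j ∈ Icc 2 n, ∑ k ∈ Icc j n, θ k j * v j * v k = u j * v j := by
      intro j hj
      simp only [hud]
      rw [Finset.sum_mul]
      exact Finset.sum_congr rfl (fun k hk => by ring)
    rw [Finset.sum_congr rfl e1]
    have e2 : ∀ k ∈ Icc 2 n, u k * v k
        = b0 τ k * (u k)^2 + b1 τ (k+1) * u k * u (k+1) := by
      intro k hk; simp only [mem_Icc] at hk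
      rw [← hI k hk.1 hk.2]; ring
    rw [Finset.sum_congr rfl e2, Finset.sum_add_distrib]
    congr 1
    rw [← Finset.Ico_add_one_right_eq_Icc, Finset.sum_Ico_succ_top (by omega : 2 ≤ n), hun1]
    ring
  -- positive definiteness
  have hS : ∀ m, 2 ≤ m → m ≤ n →
      c1 * ∑ k ∈ Icc 2 m, (u k)^2 / τ k + M * ((u m)^2 / τ m) ≤
      2 * (∑ k ∈ Icc 2 m, b0 τ k * (u k)^2
        + ∑ k ∈ Ico 2 m, b1 τ (k+1) * u k * u (k+1)) := by
    intro m hm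
    induction m, hm using Nat.le_induction with
    | base =>
      intro h2n
      simp only [Finset.Icc_self, Finset.Ico_self, Finset.sum_singleton, Finset.sum_empty]
      have hτ2 : 0 < τ 2 := hτn 2 (by omega) h2n
      obtain ⟨hr1, hr2⟩ := hratn 2 (by omega) h2n
      have hb : 1 / τ 2 ≤ b0 τ 2 := by
        unfold b0
        rw [div_le_div_iff₀ hτ2 (by nlinarith)]
        nlinarith
      have f1 := mul_le_mul_of_nonneg_right hb (sq_nonneg (u 2))
      have f2 : 0 ≤ (2 - (c1+M)) * ((u 2)^2 / τ 2) :=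
        mul_nonneg (by linarith) (by positivity)
      have e0 : (u 2)^2 / τ 2 = 1/τ 2 * (u 2)^2 := by ring
      linarith [f1, f2, e0]
    | succ m hm ih =>
      intro hm1n
      have hmn : m ≤ n := by omega
      have ihm := ih hmn
      obtain ⟨hrpos, hrle⟩ := hratn (m+1) (by omega) hm1n
      have hτm : 0 < τ m := hτn m (by omega) hmn
      set s := Real.sqrt (ratio τ (m+1)) with hsd
      have hspos : 0 < s := Real.sqrt_pos.mpr hrpos
      have hs2 : s^2 = ratio τ (m+1) := Real.sq_sqrt hrpos.le
      have hτm1 : τ (m+1) = s^2 * τ m := by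
        rw [hs2]
        unfold ratio
        simp only [Nat.add_sub_cancel]
        field_simp
      have hb0' : b0 τ (m+1) = (1+2*s^2)/((s^2*τ m)*(1+s^2)) := by
        unfold b0
        rw [← hs2, hτm1]
      have hb1' : b1 τ (m+1) = -((s^2)^2)/((s^2*τ m)*(1+s^2)) := by
        unfold b1
        rw [← hs2, hτm1]
      have hst := hstep s (τ m) (u m) (u (m+1)) hspos (by rw [hs2]; exact hrle) hτm
      rw [Finset.sum_Icc_succ_top (by omega : 2 ≤ m+1) (fun k => (u k)^2/τ k),
        Finset.sum_Icc_succ_top (by omega : 2 ≤ m+1) (fun k => b0 τ k * (u k)^2),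
        Finset.sum_Ico_succ_top (by omega : 2 ≤ m) (fun k => b1 τ (k+1) * u k * u (k+1)),
        hb0', hb1', hτm1]
      linarith [ihm, hst]
  -- transfer bound
  have hA4 : ∀ k, 2 ≤ k → k ≤ n → τ k * (b0 τ k)^2 ≤ 4 / τ k := by
    intro k hk2 hkn
    obtain ⟨hr1, hr2⟩ := hratn k hk2 hkn
    have hτk : 0 < τ k := hτn k (by omega) hkn
    unfold b0
    have hden : (0:ℝ) < (τ k * (1 + ratio τ k))^2 := pow_pos (by nlinarith) 2
    rw [div_pow, mul_div_assoc', div_le_div_iff₀ hden hτk]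
    nlinarith [mul_nonneg (mul_pos hτk hτk).le (by nlinarith : (0:ℝ) ≤ 3 + 4*ratio τ k)]
  have hB4 : ∀ k, 2 ≤ k → k + 1 ≤ n → τ k * (b1 τ (k+1))^2 ≤ (2*ruser^3/2) / τ (k+1) := by
    intro k hk2 hk1n
    obtain ⟨hr1', hr2'⟩ := hratn (k+1) (by omega) hk1n
    have hτk : 0 < τ k := hτn k (by omega) (by omega)
    have hτk1 : 0 < τ (k+1) := hτn (k+1) (by omega) hk1n
    have hτeq : τ (k+1) = ratio τ (k+1) * τ k := by
      unfold ratio; simp only [Nat.add_sub_cancel]; field_simp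
    have hr3 : ratio τ (k+1)^3 ≤ ruser^3 := by
      exact pow_le_pow_left₀ hr1'.le hr2' 3
    unfold b1
    have hden : (0:ℝ) < (τ (k+1) * (1 + ratio τ (k+1)))^2 := pow_pos (by nlinarith) 2
    rw [div_pow, mul_div_assoc', div_le_div_iff₀ hden hτk1]
    rw [hτeq]
    nlinarith [mul_pos hτk hτk, sq_nonneg (ratio τ (k+1)), mul_pos hr1' hr1',
      mul_nonneg (mul_nonneg (mul_pos hτk hτk).le (mul_pos hr1' hr1').le)
        (by nlinarith : (0:ℝ) ≤ ruser^3 - ratio τ (k+1)^3),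
      mul_nonneg (mul_nonneg (mul_nonneg (mul_pos hτk hτk).le (mul_pos hr1' hr1').le)
        (by positivity : (0:ℝ) ≤ ruser^3))
        (by nlinarith : (0:ℝ) ≤ 2*ratio τ (k+1) + ratio τ (k+1)^2)]
  have hrowb : ∀ k, 2 ≤ k → k + 1 ≤ n →
      τ k * (b0 τ k * u k + b1 τ (k+1) * u (k+1))^2
        ≤ 8 * ((u k)^2 / τ k) + 2*ruser^3 * ((u (k+1))^2 / τ (k+1)) := by
    intro k hk2 hk1n
    have hτk : 0 < τ k := hτn k (by omega) (by omega)
    have hτk1 : 0 < τ (k+1) := hτn (k+1) (by omega) hk1n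
    have f1 := mul_le_mul_of_nonneg_right (hA4 k hk2 (by omega)) (sq_nonneg (u k))
    have f2 := mul_le_mul_of_nonneg_right (hB4 k hk2 hk1n) (sq_nonneg (u (k+1)))
    have f3 := mul_nonneg hτk.le (sq_nonneg (b0 τ k * u k - b1 τ (k+1) * u (k+1)))
    have e1 : 8 * ((u k)^2 / τ k) = 2*(4 / τ k * (u k)^2) := by ring
    have e2 : 2*ruser^3 * ((u (k+1))^2 / τ (k+1))
        = 2*((2*ruser^3/2) / τ (k+1) * (u (k+1))^2) := by ring
    linarith [f1, f2, f3, e1, e2]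
  have hrowl : ∀ k, 2 ≤ k → k ≤ n →
      τ k * (b0 τ k * u k)^2 ≤ 4 * ((u k)^2 / τ k) := by
    intro k hk2 hkn
    have f1 := mul_le_mul_of_nonneg_right (hA4 k hk2 hkn) (sq_nonneg (u k))
    have e1 : 4 * ((u k)^2 / τ k) = 4 / τ k * (u k)^2 := by ring
    linarith [f1, e1]
  have hT : ∀ m, 2 ≤ m → m ≤ n →
      ∑ k ∈ Icc 2 m, τ k * (v k)^2 ≤
        (8 + 2*ruser^3) * ∑ k ∈ Icc 2 m, (u k)^2 / τ k
          + (if m < n then (2*ruser^3) * ((u (m+1))^2 / τ (m+1)) else 0) := by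
    intro m hm
    induction m, hm using Nat.le_induction with
    | base =>
      intro h2n
      simp only [Finset.Icc_self, Finset.sum_singleton]
      rw [← hI 2 le_rfl h2n]
      have hτ2 : 0 < τ 2 := hτn 2 (by omega) h2n
      rcases eq_or_lt_of_le h2n with he | hlt
      · rw [if_neg (by omega)]
        rw [← he] at hun1
        rw [hun1, mul_zero, add_zero]
        have f1 := hrowl 2 le_rfl h2n
        have f2 : (0:ℝ) ≤ 2*ruser^3 * ((u 2)^2 / τ 2) := by positivity
        have f3 : (0:ℝ) ≤ (u 2)^2 / τ 2 := by positivity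
        linarith [f1, f2, f3]
      · rw [if_pos hlt]
        have f1 := hrowb 2 le_rfl (by omega)
        have f2 : (0:ℝ) ≤ 2*ruser^3 * ((u 2)^2 / τ 2) := by positivity
        linarith [f1, f2]
    | succ m hm ih =>
      intro hm1n
      have hmn : m ≤ n := by omega
      have ihm := ih hmn
      rw [if_pos (by omega : m < n)] at ihm
      have hτm1 : 0 < τ (m+1) := hτn (m+1) (by omega) hm1n
      rw [Finset.sum_Icc_succ_top (by omega : 2 ≤ m+1) (fun k => τ k * (v k)^2),
        Finset.sum_Icc_succ_top (by omega : 2 ≤ m+1) (fun k => (u k)^2/τ k),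
        ← hI (m+1) (by omega) hm1n]
      rcases eq_or_lt_of_le hm1n with he | hlt
      · rw [if_neg (by omega)]
        rw [← he] at hun1
        rw [hun1, mul_zero, add_zero]
        have f1 := hrowl (m+1) (by omega) hm1n
        have f2 : (0:ℝ) ≤ (u (m+1))^2 / τ (m+1) := by positivity
        linarith [ihm, f1, f2]
      · rw [if_pos hlt]
        have f1 := hrowb (m+1) (by omega) (by omega)
        linarith [ihm, f1]
  -- assemble
  have hSn := hS n hn2 le_rfl
  have hTn := hT n hn2 le_rfl
  rw [if_neg (lt_irrefl n)] at hTn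
  rw [ge_iff_le, hQF]
  have hτnn : 0 < τ n := hτn n (by omega) le_rfl
  have h1 : 0 ≤ M * ((u n)^2 / τ n) := by positivity
  have hsum0 : 0 ≤ ∑ k ∈ Icc 2 n, (u k)^2 / τ k := by
    apply Finset.sum_nonneg
    intro k hk
    simp only [mem_Icc] at hk
    have := hτn k (by omega) hk.2
    positivity
  have h2 : c1 / (8 + 2*ruser^3) * ∑ k ∈ Icc 2 n, τ k * (v k)^2
      ≤ c1 * ∑ k ∈ Icc 2 n, (u k)^2 / τ k := by
    have hc : c1 / (8 + 2*ruser^3) * ((8 + 2*ruser^3) * ∑ k ∈ Icc 2 n, (u k)^2 / τ k)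
        = c1 * ∑ k ∈ Icc 2 n, (u k)^2 / τ k := by
      rw [← mul_assoc, div_mul_cancel₀ _ (by positivity : (8 + 2*ruser^3) ≠ (0:ℝ))]
    calc c1 / (8 + 2*ruser^3) * ∑ k ∈ Icc 2 n, τ k * (v k)^2
        ≤ c1 / (8 + 2*ruser^3) * ((8 + 2*ruser^3) * ∑ k ∈ Icc 2 n, (u k)^2 / τ k) := by
          apply mul_le_mul_of_nonneg_left _ (by positivity)
          linarith [hTn]
      _ = c1 * ∑ k ∈ Icc 2 n, (u k)^2 / τ k := hc
  have hfin : ∑ k ∈ Icc 2 n, τ k * v k ^ 2 = ∑ k ∈ Icc 2 n, τ k * (v k)^2 := rfl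
  rw [hfin]
  linarith [hSn, h1, h2, hTn]
end

section
/- Let N ≥ 2 and let positive step sizes τ_1,…,τ_N be given with step ratios r_k := τ_k/τ_{k-1} satisfying 0 < r_k ≤ r_user for 2 ≤ k ≤ N, where 0 < r_user < r_* (r_* ≈ 4.864 the positive root of 1+2r−r^{3/2}=0). Set m_* := r_user^{3/2}/(1+2r_user) ∈ (0,1). Then for every n with 2 ≤ n ≤ N and every real sequence v_2,…,v_n one has 2 Σ_{k=2}^{n} Σ_{j=2}^{k} θ_{k-j}^{(k)} v_j v_k ≤ (2/(1−m_*)) Σ_{k=2}^{n} τ_k v_k². -/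
noncomputable def cfac (τ : ℕ → ℝ) (j : ℕ) : ℝ :=
  (1 + ratio τ j) / (1 + 2 * ratio τ j)
noncomputable def rfac (τ : ℕ → ℝ) (i : ℕ) : ℝ :=
  ratio τ i / (1 + 2 * ratio τ i)

lemma theta_closed (N : ℕ) (τ : ℕ → ℝ)
    (hτ : ∀ k, 1 ≤ k → k ≤ N → 0 < τ k)
    (hr : ∀ k, 2 ≤ k → k ≤ N → 0 < ratio τ k)
    (θ : ℕ → ℕ → ℝ)
    (hθdiag : ∀ n, 2 ≤ n → θ n n = 1 / b0 τ n)
    (hθrec : ∀ n k, 2 ≤ k → k < n →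
      θ n k = -(1 / b0 τ k) * ∑ j ∈ Finset.Icc (k + 1) n, θ n j * bker τ (j - k) j) :
    ∀ d n k, 2 ≤ k → k + d = n → n ≤ N →
      θ n k = τ n * cfac τ k * ∏ i ∈ Finset.Icc (k + 1) n, rfac τ i := by
  intro d
  induction d with
  | zero =>
    intro n k hk hkn hnN
    subst hkn
    simp only [Nat.add_zero]
    rw [Finset.Icc_eq_empty (by omega), Finset.prod_empty, hθdiag _ (by simpa using hk)]
    rw [b0, cfac, one_div_div]
    ring
  | succ d ih =>
    intro n k hk hkn hnN
    have hkN : k ≤ N := by omega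
    have hk1N : k + 1 ≤ N := by omega
    have hrec := hθrec n k hk (by omega)
    have hsum : ∑ j ∈ Finset.Icc (k + 1) n, θ n j * bker τ (j - k) j
        = θ n (k + 1) * b1 τ (k + 1) := by
      rw [Finset.sum_eq_single_of_mem (k + 1) (by simp [Finset.mem_Icc]; omega)]
      · congr 1
        simp [bker]
      · intro j hj hne
        simp only [Finset.mem_Icc] at hj
        have h0 : j - k ≠ 0 := by omega
        have h1 : j - k ≠ 1 := by omega
        simp [bker, h0, h1]
    have hk1 := ih n (k + 1) (by omega) (by omega) hnN
    have hprod : ∏ i ∈ Finset.Icc (k + 1) n, rfac τ i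
        = rfac τ (k + 1) * ∏ i ∈ Finset.Icc (k + 2) n, rfac τ i := by
      have hins : Finset.Icc (k + 1) n = insert (k + 1) (Finset.Icc (k + 2) n) := by
        ext x; simp only [Finset.mem_Icc, Finset.mem_insert]; omega
      rw [hins, Finset.prod_insert (by simp [Finset.mem_Icc])]
    rw [hrec, hsum, hk1, hprod]
    -- now pure algebra
    have hτk : 0 < τ k := hτ k (by omega) hkN
    have hτk1 : 0 < τ (k + 1) := hτ (k + 1) (by omega) hk1N
    have hrk : 0 < ratio τ k := hr k hk hkN
    have hrk1 : 0 < ratio τ (k + 1) := hr (k + 1) (by omega) hk1N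
    have hτeq : τ (k + 1) = ratio τ (k + 1) * τ k := by
      rw [ratio]
      simp only [Nat.add_sub_cancel]
      field_simp
    have hb1 : b1 τ (k + 1)
        = -(ratio τ (k + 1) ^ 2) / ((ratio τ (k + 1) * τ k) * (1 + ratio τ (k + 1))) := by
      rw [b1, ← hτeq]
    rw [hb1, b0, cfac, cfac, rfac]
    set r1 := ratio τ k
    set r2 := ratio τ (k + 1)
    field_simp

lemma theta_nonneg (N : ℕ) (τ : ℕ → ℝ)
    (hτ : ∀ k, 1 ≤ k → k ≤ N → 0 < τ k)
    (hr : ∀ k, 2 ≤ k → k ≤ N → 0 < ratio τ k)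
    (θ : ℕ → ℕ → ℝ)
    (hθdiag : ∀ n, 2 ≤ n → θ n n = 1 / b0 τ n)
    (hθrec : ∀ n k, 2 ≤ k → k < n →
      θ n k = -(1 / b0 τ k) * ∑ j ∈ Finset.Icc (k + 1) n, θ n j * bker τ (j - k) j)
    {k j : ℕ} (hj : 2 ≤ j) (hjk : j ≤ k) (hkN : k ≤ N) : 0 ≤ θ k j := by
  rw [theta_closed N τ hτ hr θ hθdiag hθrec (k - j) k j hj (by omega) hkN]
  have hτk : 0 < τ k := hτ k (by omega) hkN
  have hrj : 0 < ratio τ j := hr j hj (by omega)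
  have hc : 0 < cfac τ j := by
    rw [cfac]; positivity
  have hp : 0 < ∏ i ∈ Finset.Icc (j + 1) k, rfac τ i := by
    apply Finset.prod_pos
    intro i hi
    simp only [Finset.mem_Icc] at hi
    have := hr i (by omega) (by omega)
    rw [rfac]; positivity
  positivity

lemma theta_bound (N : ℕ) (τ : ℕ → ℝ)
    (hτ : ∀ k, 1 ≤ k → k ≤ N → 0 < τ k)
    (hr : ∀ k, 2 ≤ k → k ≤ N → 0 < ratio τ k)
    (θ : ℕ → ℕ → ℝ)
    (hθdiag : ∀ n, 2 ≤ n → θ n n = 1 / b0 τ n)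
    (hθrec : ∀ n k, 2 ≤ k → k < n →
      θ n k = -(1 / b0 τ k) * ∑ j ∈ Finset.Icc (k + 1) n, θ n j * bker τ (j - k) j)
    (m : ℝ) (hm0 : 0 ≤ m)
    (hw : ∀ i, 2 ≤ i → i ≤ N →
      ratio τ i * Real.sqrt (ratio τ i) / (1 + 2 * ratio τ i) ≤ m)
    {j : ℕ} (hj : 2 ≤ j) :
    ∀ k, j ≤ k → k ≤ N →
      θ k j ≤ Real.sqrt (τ j) * Real.sqrt (τ k) * m ^ (k - j) := by
  have CF := theta_closed N τ hτ hr θ hθdiag hθrec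
  refine Nat.le_induction ?_ ?_
  · -- base : k = j
    intro hjN
    rw [CF 0 j j hj (by omega) hjN, Finset.Icc_eq_empty (by omega), Finset.prod_empty,
      Nat.sub_self, pow_zero, mul_one, mul_one]
    have hτj : 0 < τ j := hτ j (by omega) hjN
    have hrj : 0 < ratio τ j := hr j hj hjN
    have hc : cfac τ j ≤ 1 := by
      rw [cfac, div_le_one (by linarith)]; linarith
    calc τ j * cfac τ j ≤ τ j * 1 := by
          apply mul_le_mul_of_nonneg_left hc hτj.le
      _ = Real.sqrt (τ j) * Real.sqrt (τ j) := by
          rw [mul_one, Real.mul_self_sqrt hτj.le]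
  · -- step
    intro k hjk ih hk1N
    have hkN : k ≤ N := by omega
    have hτk : 0 < τ k := hτ k (by omega) hkN
    have hτk1 : 0 < τ (k + 1) := hτ (k + 1) (by omega) hk1N
    have hrk1 : 0 < ratio τ (k + 1) := hr (k + 1) (by omega) hk1N
    have hτeq : τ (k + 1) = ratio τ (k + 1) * τ k := by
      rw [ratio]; simp only [Nat.add_sub_cancel]
      field_simp [(hτ k (by omega) hkN).ne']
    have hstep : θ (k + 1) j = θ k j * (ratio τ (k + 1) * rfac τ (k + 1)) := by
      rw [CF (k + 1 - j) (k + 1) j hj (by omega) hk1N,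
        CF (k - j) k j hj (by omega) hkN,
        Finset.prod_Icc_succ_top (by omega : j + 1 ≤ k + 1), hτeq]
      ring
    rw [hstep]
    have hθk0 : 0 ≤ θ k j := theta_nonneg N τ hτ hr θ hθdiag hθrec hj hjk hkN
    set r := ratio τ (k + 1) with hrdef
    -- the per-step factor bound : r * rfac (k+1) ≤ sqrt r * m
    have hfac : r * rfac τ (k + 1) ≤ Real.sqrt r * m := by
      have h1 : r * Real.sqrt r / (1 + 2 * r) ≤ m := hw (k + 1) (by omega) hk1N
      have h2 : 0 ≤ Real.sqrt r := Real.sqrt_nonneg r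
      calc r * rfac τ (k + 1) = r * (r / (1 + 2 * r)) := by rw [rfac]
        _ = (Real.sqrt r * Real.sqrt r) * (r / (1 + 2 * r)) := by
            rw [Real.mul_self_sqrt hrk1.le]
        _ = Real.sqrt r * (r * Real.sqrt r / (1 + 2 * r)) := by ring
        _ ≤ Real.sqrt r * m := mul_le_mul_of_nonneg_left h1 h2
    have hfac0 : 0 ≤ r * rfac τ (k + 1) := by
      rw [rfac]; positivity
    have hsq : Real.sqrt (τ (k + 1)) = Real.sqrt r * Real.sqrt (τ k) := by
      rw [hτeq, Real.sqrt_mul hrk1.le]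
    have hexp : (k + 1 - j) = (k - j) + 1 := by omega
    rw [hsq, hexp, pow_succ]
    calc θ k j * (r * rfac τ (k + 1))
        ≤ (Real.sqrt (τ j) * Real.sqrt (τ k) * m ^ (k - j)) * (Real.sqrt r * m) := by
          apply mul_le_mul (ih hkN) hfac hfac0 (by positivity)
      _ = Real.sqrt (τ j) * (Real.sqrt r * Real.sqrt (τ k)) * (m ^ (k - j) * m) := by ring

lemma geo_sum_le {m : ℝ} (h0 : 0 ≤ m) (h1 : m < 1) (L : ℕ) :
    ∑ i ∈ Finset.range L, m ^ i ≤ 1 / (1 - m) := by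
  rw [geom_sum_eq (ne_of_lt h1)]
  have h2 : (m ^ L - 1) / (m - 1) = (1 - m ^ L) / (1 - m) := by
    rw [← neg_div_neg_eq]; ring_nf
  rw [h2]
  gcongr
  · have := pow_nonneg h0 L; linarith

lemma geo_forward {m : ℝ} (h0 : 0 ≤ m) (h1 : m < 1) (j n : ℕ) :
    ∑ k ∈ Finset.Icc j n, m ^ (k - j) ≤ 1 / (1 - m) := by
  rw [← Finset.Ico_add_one_right_eq_Icc, Finset.sum_Ico_eq_sum_range]
  calc ∑ i ∈ Finset.range (n + 1 - j), m ^ (j + i - j)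
      = ∑ i ∈ Finset.range (n + 1 - j), m ^ i := by
        apply Finset.sum_congr rfl; intro i _; congr 1; omega
    _ ≤ 1 / (1 - m) := geo_sum_le h0 h1 _

lemma geo_back {m : ℝ} (h0 : 0 ≤ m) (h1 : m < 1) (k : ℕ) :
    ∑ j ∈ Finset.Icc 2 k, m ^ (k - j) ≤ 1 / (1 - m) := by
  rw [← Finset.Ico_add_one_right_eq_Icc, Finset.sum_Ico_eq_sum_range]
  calc ∑ i ∈ Finset.range (k + 1 - 2), m ^ (k - (2 + i))
      = ∑ i ∈ Finset.range (k + 1 - 2), m ^ ((k + 1 - 2) - 1 - i) := by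
        apply Finset.sum_congr rfl; intro i _; congr 1; omega
    _ = ∑ i ∈ Finset.range (k + 1 - 2), m ^ i := Finset.sum_range_reflect _ _
    _ ≤ 1 / (1 - m) := geo_sum_le h0 h1 _

lemma cross_le {r R : ℝ} (hr : 0 < r) (h : r ≤ R) :
    r * Real.sqrt r * (1 + 2 * R) ≤ R * Real.sqrt R * (1 + 2 * r) := by
  have ha2 : Real.sqrt r * Real.sqrt r = r := Real.mul_self_sqrt hr.le
  have hb2 : Real.sqrt R * Real.sqrt R = R := Real.mul_self_sqrt (hr.le.trans h)
  have hab : Real.sqrt r ≤ Real.sqrt R := Real.sqrt_le_sqrt h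
  have ha : 0 < Real.sqrt r := Real.sqrt_pos.2 hr
  set a := Real.sqrt r
  set b := Real.sqrt R
  rw [← ha2, ← hb2]
  nlinarith [mul_nonneg (sub_nonneg.2 hab) (by nlinarith : (0:ℝ) ≤ a*a + a*b + b*b),
    mul_nonneg (mul_nonneg (mul_nonneg ha.le ha.le)
      (mul_nonneg (ha.trans_le hab).le (ha.trans_le hab).le)) (sub_nonneg.2 hab)]

lemma cross_lt {r R : ℝ} (hr : 0 < r) (h : r < R) :
    r * Real.sqrt r * (1 + 2 * R) < R * Real.sqrt R * (1 + 2 * r) := by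
  have ha2 : Real.sqrt r * Real.sqrt r = r := Real.mul_self_sqrt hr.le
  have hb2 : Real.sqrt R * Real.sqrt R = R := Real.mul_self_sqrt (hr.le.trans h.le)
  have hab : Real.sqrt r < Real.sqrt R := Real.sqrt_lt_sqrt hr.le h
  have ha : 0 < Real.sqrt r := Real.sqrt_pos.2 hr
  set a := Real.sqrt r
  set b := Real.sqrt R
  rw [← ha2, ← hb2]
  nlinarith [mul_pos (sub_pos.2 hab) (by nlinarith : (0:ℝ) < a*a + a*b + b*b),
    mul_nonneg (mul_nonneg (mul_nonneg ha.le ha.le)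
      (mul_nonneg (ha.trans hab).le (ha.trans hab).le)) (sub_nonneg.2 hab.le)]

lemma rpow32 {r : ℝ} (hr : 0 < r) : r ^ ((3:ℝ)/2) = r * Real.sqrt r := by
  rw [show (3:ℝ)/2 = 1 + 1/2 by norm_num, Real.rpow_add hr, Real.rpow_one,
    Real.sqrt_eq_rpow]

theorem doc_quadratic_form_upper_bound
    (N : ℕ) (hN : 2 ≤ N) (τ : ℕ → ℝ)
    (hτ : ∀ k, 1 ≤ k → k ≤ N → 0 < τ k)
    (ruser rstar : ℝ) (hruser_pos : 0 < ruser)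
    (hrstar_pos : 0 < rstar)
    (hrstar_root : 1 + 2 * rstar - rstar ^ ((3 : ℝ) / 2) = 0)
    (hru : ruser < rstar)
    (hr : ∀ k, 2 ≤ k → k ≤ N → 0 < ratio τ k ∧ ratio τ k ≤ ruser)
    (θ : ℕ → ℕ → ℝ)
    (hθdiag : ∀ n, 2 ≤ n → θ n n = 1 / b0 τ n)
    (hθrec : ∀ n k, 2 ≤ k → k < n →
      θ n k = -(1 / b0 τ k) * ∑ j ∈ Finset.Icc (k + 1) n, θ n j * bker τ (j - k) j)
    (n : ℕ) (hn : 2 ≤ n) (hnN : n ≤ N) (v : ℕ → ℝ) :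
    2 * ∑ k ∈ Finset.Icc 2 n, ∑ j ∈ Finset.Icc 2 k, θ k j * v j * v k
      ≤ 2 / (1 - ruser ^ ((3 : ℝ) / 2) / (1 + 2 * ruser))
          * ∑ k ∈ Finset.Icc 2 n, τ k * v k ^ 2 := by
  have hr' : ∀ k, 2 ≤ k → k ≤ N → 0 < ratio τ k := fun k h1 h2 => (hr k h1 h2).1
  set m : ℝ := ruser ^ ((3 : ℝ) / 2) / (1 + 2 * ruser) with hmdef
  have hden : (0:ℝ) < 1 + 2 * ruser := by linarith
  have hmeq : m = ruser * Real.sqrt ruser / (1 + 2 * ruser) := by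
    rw [hmdef, rpow32 hruser_pos]
  have hm0 : 0 ≤ m := by
    rw [hmeq]; positivity
  have hm1 : m < 1 := by
    rw [hmeq, div_lt_one hden]
    have hcr := cross_lt hruser_pos hru
    have hroot : rstar * Real.sqrt rstar = 1 + 2 * rstar := by
      rw [← rpow32 hrstar_pos]; linarith
    rw [hroot] at hcr
    have hdenR : (0:ℝ) < 1 + 2 * rstar := by linarith
    nlinarith
  have h1m : (0:ℝ) < 1 - m := by linarith
  -- per-step weight bound
  have hw : ∀ i, 2 ≤ i → i ≤ N →
      ratio τ i * Real.sqrt (ratio τ i) / (1 + 2 * ratio τ i) ≤ m := by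
    intro i h2 hiN
    obtain ⟨hpos, hle⟩ := hr i h2 hiN
    rw [hmeq, div_le_div_iff₀ (by linarith) hden]
    exact cross_le hpos hle
  -- pointwise bound
  have hpoint : ∀ k j, 2 ≤ j → j ≤ k → k ≤ N →
      2 * (θ k j * v j * v k) ≤ m ^ (k - j) * (τ j * v j ^ 2 + τ k * v k ^ 2) := by
    intro k j hj hjk hkN
    have hτj : 0 < τ j := hτ j (by omega) (by omega)
    have hτk : 0 < τ k := hτ k (by omega) hkN
    have hKB := theta_bound N τ hτ hr' θ hθdiag hθrec m hm0 hw hj k hjk hkN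
    have hθ0 := theta_nonneg N τ hτ hr' θ hθdiag hθrec hj hjk hkN
    set a := Real.sqrt (τ j) with hadef
    set b := Real.sqrt (τ k) with hbdef
    set M := m ^ (k - j) with hMdef
    have hM0 : 0 ≤ M := pow_nonneg hm0 _
    have haj : a ^ 2 = τ j := Real.sq_sqrt hτj.le
    have hbk : b ^ 2 = τ k := Real.sq_sqrt hτk.le
    rw [← haj, ← hbk]
    rcases le_or_gt 0 (v j * v k) with hvv | hvv
    · have h1 : θ k j * v j * v k ≤ (a * b * M) * (v j * v k) := by
        rw [mul_assoc]
        exact mul_le_mul_of_nonneg_right hKB hvv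
      nlinarith [mul_nonneg hM0 (sq_nonneg (a * v j - b * v k))]
    · have h1 : θ k j * v j * v k ≤ 0 := by
        rw [mul_assoc]
        exact mul_nonpos_of_nonneg_of_nonpos hθ0 hvv.le
      nlinarith [mul_nonneg hM0 (mul_nonneg (sq_nonneg a) (sq_nonneg (v j))),
        mul_nonneg hM0 (mul_nonneg (sq_nonneg b) (sq_nonneg (v k)))]
  -- assemble
  have hA : ∑ k ∈ Finset.Icc 2 n, ∑ j ∈ Finset.Icc 2 k, m ^ (k - j) * (τ k * v k ^ 2)
      ≤ (1 / (1 - m)) * ∑ k ∈ Finset.Icc 2 n, τ k * v k ^ 2 := by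
    rw [Finset.mul_sum]
    apply Finset.sum_le_sum
    intro k hk
    simp only [Finset.mem_Icc] at hk
    have hτk : 0 < τ k := hτ k (by omega) (by omega)
    rw [← Finset.sum_mul]
    apply mul_le_mul_of_nonneg_right (geo_back hm0 hm1 k) (by positivity)
  have hB : ∑ k ∈ Finset.Icc 2 n, ∑ j ∈ Finset.Icc 2 k, m ^ (k - j) * (τ j * v j ^ 2)
      ≤ (1 / (1 - m)) * ∑ k ∈ Finset.Icc 2 n, τ k * v k ^ 2 := by
    have hswap : ∑ k ∈ Finset.Icc 2 n, ∑ j ∈ Finset.Icc 2 k, m ^ (k - j) * (τ j * v j ^ 2)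
        = ∑ j ∈ Finset.Icc 2 n, ∑ k ∈ Finset.Icc j n, m ^ (k - j) * (τ j * v j ^ 2) := by
      simp_rw [← Finset.Ico_add_one_right_eq_Icc]
      exact (Finset.sum_Ico_Ico_comm 2 (n + 1)
        (fun j k => m ^ (k - j) * (τ j * v j ^ 2))).symm
    rw [hswap, Finset.mul_sum]
    apply Finset.sum_le_sum
    intro j hj
    simp only [Finset.mem_Icc] at hj
    have hτj : 0 < τ j := hτ j (by omega) (by omega)
    rw [← Finset.sum_mul]
    apply mul_le_mul_of_nonneg_right (geo_forward hm0 hm1 j n) (by positivity)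
  calc 2 * ∑ k ∈ Finset.Icc 2 n, ∑ j ∈ Finset.Icc 2 k, θ k j * v j * v k
      = ∑ k ∈ Finset.Icc 2 n, ∑ j ∈ Finset.Icc 2 k, 2 * (θ k j * v j * v k) := by
        rw [Finset.mul_sum]
        exact Finset.sum_congr rfl fun k _ => Finset.mul_sum _ _ _
    _ ≤ ∑ k ∈ Finset.Icc 2 n, ∑ j ∈ Finset.Icc 2 k,
          m ^ (k - j) * (τ j * v j ^ 2 + τ k * v k ^ 2) := by
        apply Finset.sum_le_sum
        intro k hk
        simp only [Finset.mem_Icc] at hk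
        apply Finset.sum_le_sum
        intro j hj
        simp only [Finset.mem_Icc] at hj
        exact hpoint k j (by omega) (by omega) (by omega)
    _ = (∑ k ∈ Finset.Icc 2 n, ∑ j ∈ Finset.Icc 2 k, m ^ (k - j) * (τ j * v j ^ 2))
        + ∑ k ∈ Finset.Icc 2 n, ∑ j ∈ Finset.Icc 2 k, m ^ (k - j) * (τ k * v k ^ 2) := by
        rw [← Finset.sum_add_distrib]
        apply Finset.sum_congr rfl
        intro k _
        rw [← Finset.sum_add_distrib]
        apply Finset.sum_congr rfl
        intro j _
        ring
    _ ≤ (1 / (1 - m)) * (∑ k ∈ Finset.Icc 2 n, τ k * v k ^ 2)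
        + (1 / (1 - m)) * ∑ k ∈ Finset.Icc 2 n, τ k * v k ^ 2 := add_le_add hB hA
    _ = 2 / (1 - m) * ∑ k ∈ Finset.Icc 2 n, τ k * v k ^ 2 := by ring
end

section
/- Let N ≥ 2 and let positive step sizes τ_1,…,τ_N be given with step ratios r_k := τ_k/τ_{k-1} satisfying 0 < r_k ≤ r_user for 2 ≤ k ≤ N, where 0 < r_user < r_* (r_* ≈ 4.864 the positive root of 1+2r−r^{3/2}=0). Set m_* := r_user^{3/2}/(1+2r_user) ∈ (0,1) and define the step-scaled DOC kernels θ̃_{k-j}^{(k)} := θ_{k-j}^{(k)}/√(τ_k τ_j) for 2 ≤ j ≤ k ≤ N. Then for every n with 2 ≤ n ≤ N and every k with 2 ≤ k ≤ n, the Gerschgorin row sum satisfies Σ_{j=2}^{k} θ̃_{k-j}^{(k)} + Σ_{j=k}^{n} θ̃_{j-k}^{(j)} < 2/(1−m_*). -/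
lemma rpow_three_halves' {r : ℝ} (hr : 0 ≤ r) : r ^ ((3:ℝ)/2) = r * Real.sqrt r := by
  rw [show (3:ℝ)/2 = (1:ℝ) + 1/2 by norm_num, Real.rpow_add' hr (by norm_num),
    Real.rpow_one, ← Real.sqrt_eq_rpow]

lemma geom_aux' {m : ℝ} (h0 : 0 ≤ m) (h1 : m < 1) (M : ℕ) :
    ∑ i ∈ Finset.range M, m ^ i ≤ (1 - m)⁻¹ := by
  have h2 : 0 < 1 - m := by linarith
  rw [geom_sum_eq (ne_of_lt h1), show (m^M - 1)/(m-1) = (1 - m^M)/(1-m) by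
    rw [← neg_div_neg_eq]; ring_nf, ← one_div]
  gcongr
  · have : 0 ≤ m ^ M := pow_nonneg h0 M
    linarith

lemma mono_aux_strict' {r u : ℝ} (hr : 0 < r) (hru : r < u) :
    r * Real.sqrt r * (1 + 2*u) < u * Real.sqrt u * (1 + 2*r) := by
  have hu : 0 < u := lt_trans hr hru
  have hs : Real.sqrt r < Real.sqrt u := Real.sqrt_lt_sqrt hr.le hru
  have hs0 : 0 < Real.sqrt r := Real.sqrt_pos.mpr hr
  have h1 : r * Real.sqrt r < u * Real.sqrt u := by
    apply mul_lt_mul' hru.le hs hs0.le hu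
  nlinarith [mul_le_mul_of_nonneg_left hs.le (by positivity : (0:ℝ) ≤ 2*r*u)]

lemma step_aux' (tk tp tn rk rp m θ1 θ0 : ℝ) (d : ℕ)
    (htk : 0 < tk) (htp : 0 < tp) (htn : 0 < tn)
    (hrk : 0 < rk) (hm : 0 < m)
    (hrpval : rp = tp / tk)
    (hmono : rp * Real.sqrt rp ≤ m * (1 + 2 * rp))
    (hIH : θ1 / Real.sqrt (tn * tp) ≤ (1 + rp) / (1 + 2 * rp) * m ^ d)
    (hrec : θ0 = -(1 / ((1 + 2 * rk) / (tk * (1 + rk)))) *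
      (θ1 * (-(rp ^ 2) / (tp * (1 + rp)))))
    : θ0 / Real.sqrt (tn * tk) ≤ (1 + rk) / (1 + 2 * rk) * m ^ (d + 1) := by
  have hrp : 0 < rp := hrpval ▸ div_pos htp htk
  set sk := Real.sqrt tk with hsk
  set st := Real.sqrt tp with hstp
  set sn := Real.sqrt tn with hsn
  have hsk0 : 0 < sk := Real.sqrt_pos.mpr htk
  have hst0 : 0 < st := Real.sqrt_pos.mpr htp
  have hsn0 : 0 < sn := Real.sqrt_pos.mpr htn
  have hsk2 : sk ^ 2 = tk := Real.sq_sqrt htk.le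
  have hst2 : st ^ 2 = tp := Real.sq_sqrt htp.le
  have hsqrp : Real.sqrt rp = st / sk := by
    rw [hrpval, Real.sqrt_div htp.le, ← hsk, ← hstp]
  rw [Real.sqrt_mul htn.le, ← hsn, ← hstp] at hIH
  rw [Real.sqrt_mul htn.le, ← hsn, ← hsk]
  rw [div_le_iff₀ (by positivity)] at hIH
  rw [div_le_iff₀ (by positivity)]
  have hrec' : θ0 = θ1 * ((rp ^ 2 * tk * (1 + rk)) / (tp * (1 + rp) * (1 + 2 * rk))) := by
    rw [hrec]; field_simp
  have hA : (0:ℝ) < (rp ^ 2 * tk * (1 + rk)) / (tp * (1 + rp) * (1 + 2 * rk)) := by positivity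
  calc θ0 ≤ ((1 + rp) / (1 + 2 * rp) * m ^ d * (sn * st)) *
        ((rp ^ 2 * tk * (1 + rk)) / (tp * (1 + rp) * (1 + 2 * rk))) := by
        rw [hrec']; exact mul_le_mul_of_nonneg_right hIH hA.le
    _ = ((1 + rk) / (1 + 2 * rk) * m ^ d * (sn * sk)) * ((rp * (st / sk)) / (1 + 2 * rp)) := by
        rw [hrpval, ← hsk2, ← hst2]; field_simp
    _ ≤ ((1 + rk) / (1 + 2 * rk) * m ^ d * (sn * sk)) * m := by
        apply mul_le_mul_of_nonneg_left ?_ (by positivity)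
        rw [div_le_iff₀ (by positivity), ← hsqrp]
        linarith
    _ = (1 + rk) / (1 + 2 * rk) * m ^ (d + 1) * (sn * sk) := by ring

theorem scaled_doc_gerschgorin_row_sum
    (N : ℕ) (hN : 2 ≤ N) (τ : ℕ → ℝ)
    (hτ : ∀ k, 1 ≤ k → k ≤ N → 0 < τ k)
    (ruser rstar : ℝ) (hruser_pos : 0 < ruser)
    (hrstar_pos : 0 < rstar)
    (hrstar_root : 1 + 2 * rstar - rstar ^ ((3 : ℝ) / 2) = 0)
    (hru : ruser < rstar)
    (hr : ∀ k, 2 ≤ k → k ≤ N → 0 < ratio τ k ∧ ratio τ k ≤ ruser)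
    (θ : ℕ → ℕ → ℝ)
    (hθdiag : ∀ n, 2 ≤ n → θ n n = 1 / b0 τ n)
    (hθrec : ∀ n k, 2 ≤ k → k < n →
      θ n k = -(1 / b0 τ k) * ∑ j ∈ Finset.Icc (k + 1) n, θ n j * bker τ (j - k) j)
    (n : ℕ) (hn : 2 ≤ n) (hnN : n ≤ N) (k : ℕ) (hk : 2 ≤ k) (hkn : k ≤ n) :
    ∑ j ∈ Finset.Icc 2 k, θ k j / Real.sqrt (τ k * τ j)
        + ∑ j ∈ Finset.Icc k n, θ j k / Real.sqrt (τ j * τ k)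
      < 2 / (1 - ruser ^ ((3 : ℝ) / 2) / (1 + 2 * ruser)) := by
  rw [show ruser ^ ((3:ℝ)/2) = ruser * Real.sqrt ruser from rpow_three_halves' hruser_pos.le]
  set m := ruser * Real.sqrt ruser / (1 + 2 * ruser) with hm
  have hru2 : (0:ℝ) < 1 + 2 * ruser := by linarith
  have hm0 : 0 < m := by
    rw [hm]
    have h1 := Real.sqrt_pos.mpr hruser_pos
    positivity
  have hm1 : m < 1 := by
    have hroot : rstar * Real.sqrt rstar = 1 + 2 * rstar := by
      have h := hrstar_root
      rw [rpow_three_halves' hrstar_pos.le] at h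
      linarith
    have hlt := mono_aux_strict' hruser_pos hru
    rw [hroot] at hlt
    have h2 : ruser * Real.sqrt ruser < 1 + 2 * ruser := by
      have hpos : (0:ℝ) < 1 + 2 * rstar := by linarith
      nlinarith
    rw [hm]
    exact (div_lt_one hru2).mpr h2
  have h1m : 0 < 1 - m := by linarith
  -- the key scaled-kernel bound
  have key : ∀ d kk, 2 ≤ kk → kk + d ≤ N →
      θ (kk + d) kk / Real.sqrt (τ (kk + d) * τ kk)
        ≤ (1 + ratio τ kk) / (1 + 2 * ratio τ kk) * m ^ d := by
    intro d
    induction d with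
    | zero =>
      intro kk h2 hle
      simp only [Nat.add_zero] at *
      have ht : 0 < τ kk := hτ kk (by omega) hle
      have hrk := hr kk h2 hle
      have hne1 : (1 : ℝ) + ratio τ kk ≠ 0 := by nlinarith [hrk.1]
      have hne2 : (1 : ℝ) + 2 * ratio τ kk ≠ 0 := by nlinarith [hrk.1]
      have heq : 1 / b0 τ kk / Real.sqrt (τ kk * τ kk)
          = (1 + ratio τ kk) / (1 + 2 * ratio τ kk) := by
        rw [Real.sqrt_mul_self ht.le, b0]
        field_simp
      rw [hθdiag kk h2, heq, pow_zero, mul_one]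
    | succ d ih =>
      intro kk h2 hle
      have hle' : kk + 1 + d ≤ N := by omega
      have hkN : kk ≤ N := by omega
      have hk1N : kk + 1 ≤ N := by omega
      have ht : 0 < τ kk := hτ kk (by omega) hkN
      have ht1 : 0 < τ (kk + 1) := hτ (kk + 1) (by omega) hk1N
      have hrk := hr kk h2 hkN
      have hrp := hr (kk + 1) (by omega) hk1N
      have hrpval : ratio τ (kk + 1) = τ (kk + 1) / τ kk := by
        rw [ratio, Nat.add_sub_cancel]
      have hsum : ∑ j ∈ Finset.Icc (kk + 1) (kk + (d + 1)),
            θ (kk + (d + 1)) j * bker τ (j - kk) j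
          = θ (kk + (d + 1)) (kk + 1) * b1 τ (kk + 1) := by
        rw [Finset.sum_eq_single_of_mem (kk + 1)
          (Finset.mem_Icc.mpr ⟨le_refl _, by omega⟩)]
        · rw [Nat.add_sub_cancel_left, bker, if_neg (by omega), if_pos rfl]
        · intro j hj hne
          rw [Finset.mem_Icc] at hj
          rw [bker, if_neg (by omega), if_neg (by omega), mul_zero]
      have hrec : θ (kk + (d + 1)) kk
          = -(1 / ((1 + 2 * ratio τ kk) / (τ kk * (1 + ratio τ kk)))) *
            (θ (kk + (d + 1)) (kk + 1) *
              (-(ratio τ (kk + 1) ^ 2) / (τ (kk + 1) * (1 + ratio τ (kk + 1))))) := by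
        rw [hθrec (kk + (d + 1)) kk h2 (by omega), hsum]; rfl
      have hmono : ratio τ (kk + 1) * Real.sqrt (ratio τ (kk + 1))
          ≤ m * (1 + 2 * ratio τ (kk + 1)) := by
        have hmm : ratio τ (kk+1) * Real.sqrt (ratio τ (kk+1)) * (1 + 2 * ruser)
            ≤ ruser * Real.sqrt ruser * (1 + 2 * ratio τ (kk+1)) := by
          have hu : 0 < ruser := hruser_pos
          have hs : Real.sqrt (ratio τ (kk+1)) ≤ Real.sqrt ruser :=
            Real.sqrt_le_sqrt hrp.2
          have hs0 : 0 ≤ Real.sqrt (ratio τ (kk+1)) := Real.sqrt_nonneg _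
          have h1 : ratio τ (kk+1) * Real.sqrt (ratio τ (kk+1)) ≤ ruser * Real.sqrt ruser :=
            mul_le_mul hrp.2 hs hs0 hu.le
          nlinarith [mul_le_mul_of_nonneg_left hs
            (mul_nonneg (by nlinarith [hrp.1] : (0:ℝ) ≤ 2 * ratio τ (kk+1)) hu.le)]
        rw [hm, div_mul_eq_mul_div, le_div_iff₀ (by linarith)]
        linarith
      have hIH := ih (kk + 1) (by omega) hle'
      rw [show kk + 1 + d = kk + (d + 1) by omega] at hIH
      exact step_aux' (τ kk) (τ (kk + 1)) (τ (kk + (d + 1))) (ratio τ kk) (ratio τ (kk + 1))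
        m (θ (kk + (d + 1)) (kk + 1)) (θ (kk + (d + 1)) kk) d ht ht1
        (hτ _ (by omega) (by omega)) hrk.1 hm0 hrpval hmono hIH hrec
  -- strict per-term bound
  have termlt : ∀ nn kk, 2 ≤ kk → kk ≤ nn → nn ≤ N →
      θ nn kk / Real.sqrt (τ nn * τ kk) < m ^ (nn - kk) := by
    intro nn kk h2 hle hleN
    have hkey := key (nn - kk) kk h2 (by omega)
    rw [show kk + (nn - kk) = nn by omega] at hkey
    refine lt_of_le_of_lt hkey ?_
    have hrkk := hr kk h2 (by omega)
    have hfrac : (1 + ratio τ kk) / (1 + 2 * ratio τ kk) < 1 := by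
      rw [div_lt_one (by nlinarith [hrkk.1])]
      linarith [hrkk.1]
    calc (1 + ratio τ kk) / (1 + 2 * ratio τ kk) * m ^ (nn - kk)
        < 1 * m ^ (nn - kk) := by
          exact mul_lt_mul_of_pos_right hfrac (pow_pos hm0 _)
      _ = m ^ (nn - kk) := one_mul _
  -- first sum
  have sum1 : ∑ j ∈ Finset.Icc 2 k, θ k j / Real.sqrt (τ k * τ j)
      < (1 - m)⁻¹ := by
    have hlt : ∑ j ∈ Finset.Icc 2 k, θ k j / Real.sqrt (τ k * τ j)
        < ∑ j ∈ Finset.Icc 2 k, m ^ (k - j) := by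
      apply Finset.sum_lt_sum_of_nonempty (Finset.nonempty_Icc.mpr hk)
      intro j hj
      rw [Finset.mem_Icc] at hj
      exact termlt k j hj.1 hj.2 (by omega)
    refine hlt.trans_le ?_
    have himg : ∑ j ∈ Finset.Icc 2 k, m ^ (k - j)
        = ∑ i ∈ (Finset.Icc 2 k).image (fun j => k - j), m ^ i := by
      rw [Finset.sum_image]
      intro x hx y hy hxy
      rw [Finset.mem_coe, Finset.mem_Icc] at hx hy
      beta_reduce at hxy
      omega
    rw [himg]
    have hsub : (Finset.Icc 2 k).image (fun j => k - j) ⊆ Finset.range (k - 1) := by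
      intro i hi
      rw [Finset.mem_image] at hi
      obtain ⟨j, hj, rfl⟩ := hi
      rw [Finset.mem_Icc] at hj
      rw [Finset.mem_range]
      omega
    refine le_trans (Finset.sum_le_sum_of_subset_of_nonneg hsub
      (fun i _ _ => pow_nonneg hm0.le i)) (geom_aux' hm0.le hm1 _)
  -- second sum
  have sum2 : ∑ j ∈ Finset.Icc k n, θ j k / Real.sqrt (τ j * τ k)
      < (1 - m)⁻¹ := by
    have hlt : ∑ j ∈ Finset.Icc k n, θ j k / Real.sqrt (τ j * τ k)
        < ∑ j ∈ Finset.Icc k n, m ^ (j - k) := by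
      apply Finset.sum_lt_sum_of_nonempty (Finset.nonempty_Icc.mpr hkn)
      intro j hj
      rw [Finset.mem_Icc] at hj
      exact termlt j k hk hj.1 (by omega)
    refine hlt.trans_le ?_
    have himg : ∑ j ∈ Finset.Icc k n, m ^ (j - k)
        = ∑ i ∈ (Finset.Icc k n).image (fun j => j - k), m ^ i := by
      rw [Finset.sum_image]
      intro x hx y hy hxy
      rw [Finset.mem_coe, Finset.mem_Icc] at hx hy
      beta_reduce at hxy
      omega
    rw [himg]
    have hsub : (Finset.Icc k n).image (fun j => j - k) ⊆ Finset.range (n - k + 1) := by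
      intro i hi
      rw [Finset.mem_image] at hi
      obtain ⟨j, hj, rfl⟩ := hi
      rw [Finset.mem_Icc] at hj
      rw [Finset.mem_range]
      omega
    refine le_trans (Finset.sum_le_sum_of_subset_of_nonneg hsub
      (fun i _ _ => pow_nonneg hm0.le i)) (geom_aux' hm0.le hm1 _)
  have : (1 - m)⁻¹ + (1 - m)⁻¹ = 2 / (1 - m) := by
    rw [div_eq_mul_inv]; ring
  linarith [add_lt_add sum1 sum2]
end

section
/- For every r_user with 0 < r_user < r_* (r_* ≈ 4.864 the positive root of 1+2r−r^{3/2}=0) there exists a constant c > 0, depending only on r_user, with the following property: for every N ≥ 2, every family of positive step sizes τ_1,…,τ_N whose step ratios satisfy 0 < r_k ≤ r_user for 2 ≤ k ≤ N, every n with 2 ≤ n ≤ N, the symmetric matrix B := B_2 + B_2^T is positive definite (hence invertible), and for every real vector w = (w_2,…,w_n) one has w^T B^{-1} w ≤ c Σ_{k=2}^{n} τ_k w_k². -/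
open Matrix

lemma hmono {p q : ℝ} (hp : 0 ≤ p) (hpq : p ≤ q) : p^3*(1+q^2) ≤ q^3*(1+p^2) := by
  nlinarith [mul_nonneg (sub_nonneg.2 hpq)
      (by nlinarith [mul_nonneg hp (hp.trans hpq), sq_nonneg p, sq_nonneg q] :
        (0:ℝ) ≤ q^2+q*p+p^2),
    mul_nonneg (mul_nonneg (mul_nonneg (mul_nonneg hp hp) (hp.trans hpq)) (hp.trans hpq))
      (sub_nonneg.2 hpq)]

lemma gmono {p q : ℝ} (hp : 2 ≤ p) (hpq : p ≤ q) :
    (2+4*q^2-q^3)*(1+p^2) ≤ (2+4*p^2-p^3)*(1+q^2) := by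
  nlinarith [mul_nonneg (sub_nonneg.2 hpq)
    (by nlinarith : (0:ℝ) ≤ p^2+p*q+q^2-2*p-2*q+p^2*q^2)]

lemma psipos {u s : ℝ} (hu : 0 < u) (hus : u < s) (hs : s^3 = 1+2*s^2) : u^3 < 1+2*u^2 := by
  have hs2 : 2 < s := by nlinarith [sq_nonneg s]
  rcases le_or_gt u 2 with h | h
  · nlinarith
  · nlinarith [mul_pos (sub_pos.2 hus) (by nlinarith : (0:ℝ) < u^2+u*s+s^2-2*u-2*s)]

lemma core_step {ε hru u τp : ℝ} (x y : ℝ) (hu : 0 < u) (hτp : 0 < τp)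
    (h1 : (ε+hru)*(1+u^2) ≤ 2+4*u^2-u^3) (h2 : u^3 ≤ hru*(1+u^2)) :
    (ε+hru)*x^2/(u^2*τp) ≤ 2*((1+2*u^2)/((u^2*τp)*(1+u^2)))*x^2
      + 2*(-((u^2)^2)/((u^2*τp)*(1+u^2)))*x*y + hru*y^2/τp := by
  have hD : (0:ℝ) < (u^2*τp)*(1+u^2) := by positivity
  have hnum : 0 ≤ 2*(1+2*u^2)*x^2 - 2*(u^2)^2*x*y - (ε+hru)*(1+u^2)*x^2 + hru*(1+u^2)*u^2*y^2 := by
    nlinarith [mul_nonneg (pow_pos hu 3).le (sq_nonneg (x-u*y)),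
      mul_nonneg (sub_nonneg.2 h1) (sq_nonneg x),
      mul_nonneg (mul_nonneg (sub_nonneg.2 h2) (sq_nonneg u)) (sq_nonneg y)]
  have heq : 2*((1+2*u^2)/((u^2*τp)*(1+u^2)))*x^2
      + 2*(-((u^2)^2)/((u^2*τp)*(1+u^2)))*x*y + hru*y^2/τp - (ε+hru)*x^2/(u^2*τp)
      = (2*(1+2*u^2)*x^2 - 2*(u^2)^2*x*y - (ε+hru)*(1+u^2)*x^2 + hru*(1+u^2)*u^2*y^2)
        / ((u^2*τp)*(1+u^2)) := by
    field_simp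
    ring
  nlinarith [div_nonneg hnum hD.le]

lemma core_base {ε hru u τ2 : ℝ} (x : ℝ) (hu : 0 < u) (hτ2 : 0 < τ2)
    (h1 : (ε+hru)*(1+u^2) ≤ 2+4*u^2-u^3) :
    (ε+hru)*x^2/τ2 ≤ 2*((1+2*u^2)/(τ2*(1+u^2)))*x^2 := by
  have hD : (0:ℝ) < τ2*(1+u^2) := by positivity
  have hnum : 0 ≤ 2*(1+2*u^2)*x^2 - (ε+hru)*(1+u^2)*x^2 := by
    nlinarith [mul_nonneg (sub_nonneg.2 h1) (sq_nonneg x),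
      mul_nonneg (pow_pos hu 3).le (sq_nonneg x)]
  have heq : 2*((1+2*u^2)/(τ2*(1+u^2)))*x^2 - (ε+hru)*x^2/τ2
      = (2*(1+2*u^2)*x^2 - (ε+hru)*(1+u^2)*x^2)/(τ2*(1+u^2)) := by
    field_simp
  nlinarith [div_nonneg hnum hD.le]

lemma eps_pos {U s : ℝ} (hU : 0 < U) (hUs : U < s) (hs : s^3 = 1+2*s^2) :
    U^3/(1+U^2) < min 2 ((2+4*U^2-U^3)/(1+U^2)) := by
  have hψ := psipos hU hUs hs
  have hd : (0:ℝ) < 1+U^2 := by positivity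
  refine lt_min ?_ ?_
  · rw [div_lt_iff₀ hd]; nlinarith
  · rw [div_lt_div_iff₀ hd hd]; nlinarith

lemma Glem {U u : ℝ} (hu : 0 < u) (huU : u ≤ U) :
    min 2 ((2+4*U^2-U^3)/(1+U^2)) * (1+u^2) ≤ 2+4*u^2-u^3 := by
  have hd : (0:ℝ) < 1+u^2 := by positivity
  have hdU : (0:ℝ) < 1+U^2 := by positivity
  rcases le_or_gt u 2 with h | h
  · calc min 2 ((2+4*U^2-U^3)/(1+U^2)) * (1+u^2) ≤ 2 * (1+u^2) :=
          mul_le_mul_of_nonneg_right (min_le_left _ _) hd.le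
      _ ≤ 2+4*u^2-u^3 := by nlinarith
  · have h2U : 2 ≤ U := (h.le).trans huU
    calc min 2 ((2+4*U^2-U^3)/(1+U^2)) * (1+u^2)
        ≤ ((2+4*U^2-U^3)/(1+U^2)) * (1+u^2) :=
          mul_le_mul_of_nonneg_right (min_le_right _ _) hd.le
      _ ≤ 2+4*u^2-u^3 := by
          rw [div_mul_eq_mul_div, div_le_iff₀ hdU]
          exact gmono h.le huU

lemma hmono_div {U u : ℝ} (hu : 0 ≤ u) (huU : u ≤ U) : u^3 ≤ U^3/(1+U^2)*(1+u^2) := by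
  have hdU : (0:ℝ) < 1+U^2 := by positivity
  rw [div_mul_eq_mul_div, le_div_iff₀ hdU]
  nlinarith [hmono hu huU]

lemma amgm {e t a b : ℝ} (he : 0 < e) (ht : 0 < t) :
    a*b ≤ 1/(2*e)*(t*a^2) + e/2*(b^2/t) := by
  have heq : 1/(2*e)*(t*a^2) + e/2*(b^2/t) = (t^2*a^2 + e^2*b^2)/(2*e*t) := by
    field_simp
  rw [heq, le_div_iff₀ (by positivity)]
  nlinarith [sq_nonneg (t*a - e*b)]

lemma sum_ind (ε hru : ℝ) (τ : ℕ → ℝ) (W : ℕ → ℝ) (M : ℕ)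
    (hB0 : ∀ x : ℝ, ε*x^2/τ 2 + hru*x^2/τ 2 ≤ 2*(b0 τ 2)*x^2)
    (hB : ∀ k, ∀ x y : ℝ, 1 ≤ k → k+1 ≤ M →
      ε*x^2/τ (k+2) + hru*x^2/τ (k+2) ≤
        2*(b0 τ (k+2))*x^2 + 2*(b1 τ (k+2))*x*y + hru*y^2/τ (k+1)) :
    ∀ m, m ≤ M →
      ε * (∑ k ∈ Finset.range m, W k^2/τ (k+2))
        + (if 1 ≤ m then hru * W (m-1)^2/τ (m+1) else 0)
      ≤ ∑ k ∈ Finset.range m,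
          (2*(b0 τ (k+2))*W k^2 + if 1 ≤ k then 2*(b1 τ (k+2))*W k*W (k-1) else 0) := by
  intro m
  induction m with
  | zero => simp
  | succ p ih =>
    intro hpM
    rw [Finset.sum_range_succ, Finset.sum_range_succ]
    rcases Nat.eq_zero_or_pos p with hp0 | hp1
    · subst hp0
      simp only [Finset.range_zero, Finset.sum_empty, zero_add]
      have := hB0 (W 0)
      have e : ε * (W 0 ^ 2 / τ 2) = ε * W 0 ^ 2 / τ 2 := by ring
      rw [if_pos (by omega : 1 ≤ 0 + 1)]
      norm_num
      linarith [this, e]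
    · have hp1' : 1 ≤ p := hp1
      have ihp := ih (by omega)
      rw [if_pos hp1'] at ihp
      have hstep := hB p (W p) (W (p-1)) hp1 (by omega)
      have hif : (if 1 ≤ p + 1 then hru * W (p+1-1)^2/τ (p+1+1) else 0)
          = hru * W p^2/τ (p+2) := by
        rw [if_pos (by omega)]
        norm_num
      rw [hif]
      have hifk : (if 1 ≤ p then 2*(b1 τ (p+2))*W p*W (p-1) else 0)
          = 2*(b1 τ (p+2))*W p*W (p-1) := if_pos hp1'
      rw [hifk]
      have hmul : ε * (∑ k ∈ Finset.range p, W k^2/τ (k+2) + W p^2/τ (p+2))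
          = ε * (∑ k ∈ Finset.range p, W k^2/τ (k+2)) + ε * (W p^2/τ (p+2)) := by ring
      rw [hmul]
      have : ε * (W p^2/τ (p+2)) = ε * W p^2/τ (p+2) := by ring
      linarith [hstep, ihp, this]

theorem inverse_bdf2_matrix_quadratic_form_bound
    (ruser rstar : ℝ) (hruser_pos : 0 < ruser)
    (hrstar_pos : 0 < rstar)
    (hrstar_root : 1 + 2 * rstar - rstar ^ ((3 : ℝ) / 2) = 0)
    (hru : ruser < rstar) :
    ∃ c : ℝ, 0 < c ∧
      ∀ (N : ℕ), 2 ≤ N → ∀ τ : ℕ → ℝ,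
        (∀ k, 1 ≤ k → k ≤ N → 0 < τ k) →
        (∀ k, 2 ≤ k → k ≤ N → 0 < ratio τ k ∧ ratio τ k ≤ ruser) →
        ∀ n, 2 ≤ n → n ≤ N →
        ∀ B2 : Matrix (Fin (n - 1)) (Fin (n - 1)) ℝ,
          (∀ i j : Fin (n - 1), B2 i j =
            if (i : ℕ) = (j : ℕ) then b0 τ ((i : ℕ) + 2)
            else if (i : ℕ) = (j : ℕ) + 1 then b1 τ ((i : ℕ) + 2) else 0) →
          (B2 + B2ᵀ).PosDef ∧
          ∀ w : Fin (n - 1) → ℝ,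
            w ⬝ᵥ ((B2 + B2ᵀ)⁻¹ *ᵥ w) ≤ c * ∑ i : Fin (n - 1), τ ((i : ℕ) + 2) * w i ^ 2 := by
  set U := Real.sqrt ruser with hUdef
  have hU2 : U^2 = ruser := Real.sq_sqrt hruser_pos.le
  have hUpos : 0 < U := Real.sqrt_pos.2 hruser_pos
  set s := Real.sqrt rstar with hsdef
  have hs2 : s^2 = rstar := Real.sq_sqrt hrstar_pos.le
  have hss : s^3 = 1 + 2*s^2 := by
    have h32 : rstar ^ ((3:ℝ)/2) = rstar * s := by
      rw [show (3:ℝ)/2 = 1 + 1/2 by norm_num, Real.rpow_add hrstar_pos, Real.rpow_one,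
        ← Real.sqrt_eq_rpow]
    have h2 : rstar * s = s^3 := by rw [← hs2]; ring
    rw [h32, h2] at hrstar_root
    linarith [hrstar_root, hs2]
  have hUs : U < s := Real.sqrt_lt_sqrt hruser_pos.le hru
  set hruv := U^3/(1+U^2) with hruvdef
  set εv := min 2 ((2+4*U^2-U^3)/(1+U^2)) - hruv with hεdef
  have hεpos : 0 < εv := sub_pos.2 (eps_pos hUpos hUs hss)
  have hhrupos : 0 < hruv := by positivity
  have hεh : εv + hruv = min 2 ((2+4*U^2-U^3)/(1+U^2)) := by ring
  refine ⟨1/εv, by positivity, ?_⟩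
  intro N hN τ hτ hr n hn2 hnN B2 hB2
  have hm1 : 1 ≤ (n-1) := by omega
  have hmn : (n-1) + 1 = n := by omega
  -- facts about each ratio
  have hfacts : ∀ k, 2 ≤ k → k ≤ n →
      0 < Real.sqrt (ratio τ k) ∧ Real.sqrt (ratio τ k) ≤ U ∧
      (Real.sqrt (ratio τ k))^2 = ratio τ k ∧
      τ k = (Real.sqrt (ratio τ k))^2 * τ (k-1) := by
    intro k hk2 hkn
    have hrk := hr k hk2 (hkn.trans hnN)
    have hτk1 : 0 < τ (k-1) := hτ (k-1) (by omega) (by omega)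
    refine ⟨Real.sqrt_pos.2 hrk.1, ?_, Real.sq_sqrt hrk.1.le, ?_⟩
    · rw [hUdef]; exact Real.sqrt_le_sqrt hrk.2
    · rw [Real.sq_sqrt hrk.1.le]
      unfold ratio
      field_simp
  -- the key coercivity bound
  have hkey : ∀ w : Fin (n-1) → ℝ,
      εv * ∑ i : Fin (n-1), w i^2/τ ((i:ℕ)+2) ≤ w ⬝ᵥ ((B2 + B2ᵀ) *ᵥ w) := by
    intro w
    set W : ℕ → ℝ := fun k => if h : k < (n-1) then w ⟨k, h⟩ else 0 with hWdef
    have hWval : ∀ i : Fin (n-1), W (i:ℕ) = w i := by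
      intro i; simp [hWdef, i.isLt]
    -- dot product formula
    have hdot : w ⬝ᵥ (B2 *ᵥ w) = ∑ k ∈ Finset.range (n-1),
        (b0 τ (k+2) * W k^2 + if 1 ≤ k then b1 τ (k+2) * W k * W (k-1) else 0) := by
      rw [← Fin.sum_univ_eq_sum_range (fun k =>
        (b0 τ (k+2) * W k^2 + if 1 ≤ k then b1 τ (k+2) * W k * W (k-1) else 0)) (n-1)]
      simp only [dotProduct, mulVec]
      refine Finset.sum_congr rfl fun i _ => ?_
      have hsplit : ∀ j : Fin (n-1), B2 i j * w j =
          (if j = i then b0 τ ((i:ℕ)+2) * w j else 0)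
          + (if (i:ℕ) = (j:ℕ)+1 then b1 τ ((i:ℕ)+2) * w j else 0) := by
        intro j
        rw [hB2]
        simp only [Fin.ext_iff]
        split_ifs <;> first | (exfalso; omega) | ring
      have hinner : ∑ j : Fin (n-1), B2 i j * w j = b0 τ ((i:ℕ)+2) * w i
          + (if 1 ≤ (i:ℕ) then b1 τ ((i:ℕ)+2) * W ((i:ℕ)-1) else 0) := by
        rw [Finset.sum_congr rfl (fun j _ => hsplit j), Finset.sum_add_distrib]
        congr 1
        · simp
        · rcases Nat.eq_zero_or_pos (i:ℕ) with h0 | h1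
          · rw [if_neg (by omega)]
            apply Finset.sum_eq_zero
            intro j _
            rw [if_neg (by omega)]
          · have h1' : 1 ≤ (i:ℕ) := h1
            rw [if_pos h1']
            have hlt : (i:ℕ)-1 < (n-1) := by omega
            have hWm : W ((i:ℕ)-1) = w ⟨(i:ℕ)-1, hlt⟩ := by simp [hWdef, hlt]
            rw [hWm]
            have hcond : ∀ j : Fin (n-1), ((i:ℕ) = (j:ℕ)+1) ↔ j = ⟨(i:ℕ)-1, hlt⟩ := by
              intro j
              rw [Fin.ext_iff]
              constructor <;> (intro h; simp only [] at h ⊢; omega)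
            rw [Finset.sum_congr rfl (fun j _ => if_congr (hcond j) rfl rfl)]
            simp
      rw [hinner, hWval i]
      split_ifs <;> ring
    -- quadratic form = 2 * dot
    have hQ : w ⬝ᵥ ((B2 + B2ᵀ) *ᵥ w) = 2 * (w ⬝ᵥ (B2 *ᵥ w)) := by
      rw [add_mulVec, dotProduct_add, mulVec_transpose, dotProduct_comm w (w ᵥ* B2),
        ← dotProduct_mulVec]
      ring
    -- sum conversion for LHS
    have hzw : ∑ i : Fin (n-1), w i^2/τ ((i:ℕ)+2) = ∑ k ∈ Finset.range (n-1), W k^2/τ (k+2) := by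
      rw [← Fin.sum_univ_eq_sum_range (fun k => W k^2/τ (k+2)) (n-1)]
      exact Finset.sum_congr rfl fun i _ => by rw [hWval i]
    -- apply the induction lemma
    have hB0' : ∀ x : ℝ, εv*x^2/τ 2 + hruv*x^2/τ 2 ≤ 2*(b0 τ 2)*x^2 := by
      intro x
      obtain ⟨hu, huU, hu2, hτeq⟩ := hfacts 2 le_rfl hn2
      have hτ2 : 0 < τ 2 := hτ 2 (by omega) (by omega)
      have h1 : (εv+hruv)*(1+(Real.sqrt (ratio τ 2))^2) ≤
          2+4*(Real.sqrt (ratio τ 2))^2-(Real.sqrt (ratio τ 2))^3 := by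
        rw [hεh]; exact Glem hu huU
      have := core_base (ε := εv) (hru := hruv) x hu hτ2 h1
      calc εv*x^2/τ 2 + hruv*x^2/τ 2 = (εv+hruv)*x^2/τ 2 := by ring
        _ ≤ 2*((1+2*(Real.sqrt (ratio τ 2))^2)/(τ 2*(1+(Real.sqrt (ratio τ 2))^2)))*x^2 := this
        _ = 2*(b0 τ 2)*x^2 := by simp only [b0]; rw [hu2]
    have hB' : ∀ k, ∀ x y : ℝ, 1 ≤ k → k+1 ≤ (n-1) →
        εv*x^2/τ (k+2) + hruv*x^2/τ (k+2) ≤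
          2*(b0 τ (k+2))*x^2 + 2*(b1 τ (k+2))*x*y + hruv*y^2/τ (k+1) := by
      intro k x y hk1 hkm
      have hk2n : k+2 ≤ n := by omega
      obtain ⟨hu, huU, hu2, hτeq⟩ := hfacts (k+2) (by omega) hk2n
      set u := Real.sqrt (ratio τ (k+2)) with hudef
      have hτp : 0 < τ (k+1) := hτ (k+1) (by omega) (by omega)
      have hτk2 : τ (k+2) = u^2 * τ (k+1) := by
        have : k+2-1 = k+1 := by omega
        rw [this] at hτeq
        exact hτeq
      have h1 : (εv+hruv)*(1+u^2) ≤ 2+4*u^2-u^3 := by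
        rw [hεh]; exact Glem hu huU
      have h2 : u^3 ≤ hruv*(1+u^2) := hmono_div hu.le huU
      have := core_step (ε := εv) (hru := hruv) x y hu hτp h1 h2
      calc εv*x^2/τ (k+2) + hruv*x^2/τ (k+2) = (εv+hruv)*x^2/(u^2*τ (k+1)) := by
            rw [← hτk2]; ring
        _ ≤ 2*((1+2*u^2)/((u^2*τ (k+1))*(1+u^2)))*x^2
            + 2*(-((u^2)^2)/((u^2*τ (k+1))*(1+u^2)))*x*y + hruv*y^2/τ (k+1) := this
        _ = 2*(b0 τ (k+2))*x^2 + 2*(b1 τ (k+2))*x*y + hruv*y^2/τ (k+1) := by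
            simp only [b0, b1]
            rw [hτk2, hu2]
    have hind := sum_ind εv hruv τ W (n-1) hB0' hB' (n-1) le_rfl
    rw [if_pos hm1] at hind
    have hbnd : 0 ≤ hruv * W ((n-1)-1)^2/τ ((n-1)+1) := by
      have : 0 < τ ((n-1)+1) := hτ ((n-1)+1) (by omega) (by omega)
      positivity
    have hsum2 : ∑ k ∈ Finset.range (n-1),
        (2*(b0 τ (k+2))*W k^2 + if 1 ≤ k then 2*(b1 τ (k+2))*W k*W (k-1) else 0)
        = 2 * ∑ k ∈ Finset.range (n-1),
          (b0 τ (k+2) * W k^2 + if 1 ≤ k then b1 τ (k+2) * W k * W (k-1) else 0) := by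
      rw [Finset.mul_sum]
      refine Finset.sum_congr rfl fun k _ => ?_
      split_ifs <;> ring
    rw [hQ, hdot, hzw]
    rw [hsum2] at hind
    linarith [hind, hbnd]
  -- τ positivity for indices of the sums
  have hτi : ∀ i : Fin (n-1), 0 < τ ((i:ℕ)+2) := by
    intro i
    exact hτ ((i:ℕ)+2) (by omega) (by omega)
  -- positive definiteness
  have hposdef : (B2 + B2ᵀ).PosDef := by
    rw [Matrix.posDef_iff_dotProduct_mulVec]
    constructor
    · show (B2 + B2ᵀ)ᴴ = B2 + B2ᵀ
      ext i j
      simp [Matrix.conjTranspose_apply, Matrix.add_apply, Matrix.transpose_apply, add_comm]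
    · intro x hx
      have hxs : star x = x := by simp
      rw [hxs]
      obtain ⟨i, hi⟩ : ∃ i, x i ≠ 0 := by
        by_contra hc
        push_neg at hc
        exact hx (funext hc)
      have hsumpos : 0 < ∑ i : Fin (n-1), x i^2/τ ((i:ℕ)+2) := by
        apply Finset.sum_pos' (fun j _ => div_nonneg (sq_nonneg _) (hτi j).le)
        exact ⟨i, Finset.mem_univ i,
          div_pos (pow_two_pos_of_ne_zero hi) (hτi i)⟩
      calc (0:ℝ) < εv * ∑ i : Fin (n-1), x i^2/τ ((i:ℕ)+2) := mul_pos hεpos hsumpos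
        _ ≤ x ⬝ᵥ ((B2 + B2ᵀ) *ᵥ x) := hkey x
  refine ⟨hposdef, ?_⟩
  intro w
  have hdet : IsUnit (B2 + B2ᵀ).det := hposdef.det_pos.ne'.isUnit
  set v := (B2 + B2ᵀ)⁻¹ *ᵥ w with hvdef
  have hBv : (B2 + B2ᵀ) *ᵥ v = w := by
    rw [hvdef, mulVec_mulVec, Matrix.mul_nonsing_inv _ hdet, one_mulVec]
  have hL : w ⬝ᵥ v = v ⬝ᵥ ((B2 + B2ᵀ) *ᵥ v) := by
    rw [hBv, dotProduct_comm]
  have hlow : εv * ∑ i : Fin (n-1), v i^2/τ ((i:ℕ)+2) ≤ w ⬝ᵥ v := by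
    rw [hL]; exact hkey v
  have hup : w ⬝ᵥ v ≤ 1/(2*εv) * ∑ i : Fin (n-1), τ ((i:ℕ)+2) * w i^2
      + εv/2 * ∑ i : Fin (n-1), v i^2/τ ((i:ℕ)+2) := by
    rw [dotProduct, Finset.mul_sum, Finset.mul_sum, ← Finset.sum_add_distrib]
    refine Finset.sum_le_sum fun i _ => ?_
    exact amgm hεpos (hτi i)
  have hfinal : w ⬝ᵥ v ≤ 1/εv * ∑ i : Fin (n-1), τ ((i:ℕ)+2) * w i^2 := by
    have h1 : εv/2 * ∑ i : Fin (n-1), v i^2/τ ((i:ℕ)+2) ≤ (w ⬝ᵥ v)/2 := by linarith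
    have h2 : w ⬝ᵥ v ≤ 1/(2*εv) * ∑ i : Fin (n-1), τ ((i:ℕ)+2) * w i^2 + (w ⬝ᵥ v)/2 := by
      linarith
    have h3 : (w ⬝ᵥ v)/2 ≤ 1/(2*εv) * ∑ i : Fin (n-1), τ ((i:ℕ)+2) * w i^2 := by linarith
    have heq : 1/εv * ∑ i : Fin (n-1), τ ((i:ℕ)+2) * w i^2
        = 2 * (1/(2*εv) * ∑ i : Fin (n-1), τ ((i:ℕ)+2) * w i^2) := by
      field_simp
    linarith
  exact hfinal
end
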